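/- arXiv:2505.02115 — 4 statements merged into one kernel-verified Lean document; each statement's English description precedes it below -/
import Mathlib

section
/- Under Assumption A with f2 = 0 and g1(y) = (1/2) yᵀPy + bᵀy where P is symmetric positive semidefinite and BBᵀ + P is positive definite, the saddle-point problem min_x max_y f1(x) + yᵀBx − g1(y) − g2(y) has a unique solution. Concretely: if (x*, y*) and (x°, y°) both satisfy the optimality conditions ∇f1(x) + Bᵀy = 0 and Bx − Py − b ∈ ∂g2(y), then x* = x° and y* = y°. -/
open scoped RealInnerProductSpace
open Matrix

/-- Action of a matrix on Euclidean space. -/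
noncomputable def mulE {m n : ℕ} (B : Matrix (Fin m) (Fin n) ℝ)
    (x : EuclideanSpace ℝ (Fin n)) : EuclideanSpace ℝ (Fin m) :=
  Matrix.toEuclideanLin B x

/-- Largest singular value (operator norm) of a matrix. -/
noncomputable def sigmaMax {m n : ℕ} (B : Matrix (Fin m) (Fin n) ℝ) : ℝ :=
  ‖LinearMap.toContinuousLinearMap (Matrix.toEuclideanLin B)‖

/-- Largest eigenvalue of a symmetric matrix (Rayleigh quotient formulation). -/
noncomputable def lambdaMax {n : ℕ} (P : Matrix (Fin n) (Fin n) ℝ) : ℝ :=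
  ⨆ v : Metric.sphere (0 : EuclideanSpace ℝ (Fin n)) 1,
    ⟪mulE P (v : EuclideanSpace ℝ (Fin n)), (v : EuclideanSpace ℝ (Fin n))⟫

/-- Smallest eigenvalue of a symmetric matrix (Rayleigh quotient formulation). -/
noncomputable def lambdaMin {n : ℕ} (P : Matrix (Fin n) (Fin n) ℝ) : ℝ :=
  ⨅ v : Metric.sphere (0 : EuclideanSpace ℝ (Fin n)) 1,
    ⟪mulE P (v : EuclideanSpace ℝ (Fin n)), (v : EuclideanSpace ℝ (Fin n))⟫

/-- `f` is `μ`-strongly convex: `f - μ/2 ‖·‖²` is convex. -/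
def StrongConvex {n : ℕ} (μ : ℝ) (f : EuclideanSpace ℝ (Fin n) → ℝ) : Prop :=
  ConvexOn ℝ Set.univ fun x => f x - μ / 2 * ‖x‖ ^ 2

/-- A function with values in `ℝ ∪ {+∞}` (modelled by `EReal`) is proper. -/
def ProperER {n : ℕ} (f : EuclideanSpace ℝ (Fin n) → EReal) : Prop :=
  (∀ x, f x ≠ ⊥) ∧ ∃ x, f x ≠ ⊤

/-- Convexity for `EReal`-valued functions. -/
def ConvexER {n : ℕ} (f : EuclideanSpace ℝ (Fin n) → EReal) : Prop :=
  ∀ x y : EuclideanSpace ℝ (Fin n), ∀ a b : ℝ, 0 ≤ a → 0 ≤ b → a + b = 1 →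
    f (a • x + b • y) ≤ (a : EReal) * f x + (b : EReal) * f y

/-- `s` is a subgradient of the `EReal`-valued convex function `f` at `x`. -/
def IsSubgradAt {n : ℕ} (f : EuclideanSpace ℝ (Fin n) → EReal)
    (x s : EuclideanSpace ℝ (Fin n)) : Prop :=
  ∀ z, f x + ((⟪s, z - x⟫ : ℝ) : EReal) ≤ f z

/-- `p` is the proximal point `prox_{t g}(w)`, i.e. it minimizes `g(·) + 1/(2t)‖· - w‖²`. -/
def IsProx {n : ℕ} (g : EuclideanSpace ℝ (Fin n) → EReal) (t : ℝ)
    (w p : EuclideanSpace ℝ (Fin n)) : Prop :=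
  ∀ z, g p + ((1 / (2 * t) * ‖p - w‖ ^ 2 : ℝ) : EReal)
      ≤ g z + ((1 / (2 * t) * ‖z - w‖ ^ 2 : ℝ) : EReal)

/-! ### Auxiliary lemmas -/

lemma strongconv_grad_mono {n : ℕ} {μ : ℝ} {f : EuclideanSpace ℝ (Fin n) → ℝ}
    {f' : EuclideanSpace ℝ (Fin n) → EuclideanSpace ℝ (Fin n)}
    (hgrad : ∀ x, HasGradientAt f (f' x) x) (hsc : StrongConvex μ f)
    (x y : EuclideanSpace ℝ (Fin n)) :
    μ * ‖y - x‖ ^ 2 ≤ ⟪f' y - f' x, y - x⟫ := by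
  set v := y - x with hv
  set φ : ℝ → ℝ := fun t => f (x + t • v) - μ / 2 * ‖x + t • v‖ ^ 2 with hφdef
  have hconv : ConvexOn ℝ Set.univ φ := by
    have h := hsc.comp_affineMap (AffineMap.lineMap x y)
    have : ((fun z => f z - μ / 2 * ‖z‖ ^ 2) ∘ (AffineMap.lineMap x y)) = φ := by
      funext t
      simp [φ, AffineMap.lineMap_apply, add_comm, hv]
    rw [this] at h
    simpa using h
  have hline : ∀ t : ℝ, HasDerivAt (fun t : ℝ => x + t • v) v t := fun t => by
    simpa using ((hasDerivAt_id t).smul_const v).const_add x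
  have hfd : ∀ t : ℝ, HasDerivAt (fun t : ℝ => f (x + t • v)) ⟪f' (x + t • v), v⟫ t := by
    intro t
    have h := (hgrad (x + t • v)).hasFDerivAt.comp_hasDerivAt t (hline t)
    simp at h
    exact h
  have hnd : ∀ t : ℝ, HasDerivAt (fun t : ℝ => ‖x + t • v‖ ^ 2)
      (2 * ⟪x, v⟫ + 2 * t * ‖v‖ ^ 2) t := by
    intro t
    have hfun : (fun t : ℝ => ‖x + t • v‖ ^ 2)
        = fun s : ℝ => ‖x‖ ^ 2 + 2 * s * ⟪x, v⟫ + s ^ 2 * ‖v‖ ^ 2 := by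
      funext s
      rw [norm_add_sq_real, real_inner_smul_right, norm_smul]
      simp [mul_pow, sq_abs]
      ring
    rw [hfun]
    have h1 : HasDerivAt (fun s : ℝ => 2 * s * ⟪x, v⟫) (2 * ⟪x, v⟫) t := by
      simpa using ((hasDerivAt_id t).const_mul 2).mul_const ⟪x, v⟫
    have h2 : HasDerivAt (fun s : ℝ => s ^ 2 * ‖v‖ ^ 2) (2 * t * ‖v‖ ^ 2) t := by
      simpa [mul_comm] using (hasDerivAt_pow 2 t).mul_const (‖v‖ ^ 2)
    exact (h1.const_add (‖x‖ ^ 2)).add h2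
  have hφd : ∀ t : ℝ, HasDerivAt φ
      (⟪f' (x + t • v), v⟫ - μ / 2 * (2 * ⟪x, v⟫ + 2 * t * ‖v‖ ^ 2)) t :=
    fun t => (hfd t).sub ((hnd t).const_mul (μ / 2))
  have hle1 := hconv.le_slope_of_hasDerivAt (Set.mem_univ (0 : ℝ)) (Set.mem_univ 1)
    zero_lt_one (hφd 0)
  have hle2 := hconv.slope_le_of_hasDerivAt (Set.mem_univ (0 : ℝ)) (Set.mem_univ 1)
    zero_lt_one (hφd 1)
  have key := hle1.trans hle2
  have e0 : x + (0 : ℝ) • v = x := by simp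
  have e1 : x + (1 : ℝ) • v = y := by simp [hv]
  rw [e0, e1] at key
  rw [inner_sub_left]
  nlinarith [key]

lemma mulE_sub {m n : ℕ} (M : Matrix (Fin m) (Fin n) ℝ) (u v : EuclideanSpace ℝ (Fin n)) :
    mulE M u - mulE M v = mulE M (u - v) := by
  simp [mulE, map_sub]

lemma inner_mulE_left {m n : ℕ} (M : Matrix (Fin m) (Fin n) ℝ)
    (y : EuclideanSpace ℝ (Fin m)) (x : EuclideanSpace ℝ (Fin n)) :
    ⟪mulE Mᵀ y, x⟫ = ⟪y, mulE M x⟫ := by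
  rw [mulE, mulE, show Mᵀ = Mᴴ from (Matrix.conjTranspose_eq_transpose_of_trivial M).symm,
    Matrix.toEuclideanLin_conjTranspose_eq_adjoint, LinearMap.adjoint_inner_left]

lemma inner_mulE_self {n : ℕ} (M : Matrix (Fin n) (Fin n) ℝ) (w : EuclideanSpace ℝ (Fin n)) :
    ⟪w, mulE M w⟫ = dotProduct (star (WithLp.equiv 2 _ w)) (M *ᵥ (WithLp.equiv 2 _ w)) := by
  rw [EuclideanSpace.inner_eq_star_dotProduct]
  rw [dotProduct_comm]
  rfl

lemma posSemidef_inner_nonneg {n : ℕ} {M : Matrix (Fin n) (Fin n) ℝ} (hM : M.PosSemidef)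
    (w : EuclideanSpace ℝ (Fin n)) : 0 ≤ ⟪w, mulE M w⟫ := by
  rw [inner_mulE_self]
  exact hM.dotProduct_mulVec_nonneg _

lemma posDef_eq_zero {n : ℕ} {M : Matrix (Fin n) (Fin n) ℝ} (hM : M.PosDef)
    (w : EuclideanSpace ℝ (Fin n)) (hw : ⟪w, mulE M w⟫ = 0) : w = 0 := by
  by_contra h
  have hne : (WithLp.equiv 2 (Fin n → ℝ) w) ≠ 0 := by
    intro h0
    apply h
    exact (WithLp.equiv 2 (Fin n → ℝ)).injective (by simpa using h0)
  have := hM.dotProduct_mulVec_pos hne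
  rw [inner_mulE_self] at hw
  simp only [star_trivial] at hw this
  linarith

lemma mulE_mul {m n k : ℕ} (A : Matrix (Fin m) (Fin n) ℝ) (C : Matrix (Fin n) (Fin k) ℝ)
    (x : EuclideanSpace ℝ (Fin k)) : mulE (A * C) x = mulE A (mulE C x) := by
  simp [mulE, Matrix.toEuclideanLin_apply, Matrix.mulVec_mulVec]

lemma mulE_add {n k : ℕ} (A C : Matrix (Fin n) (Fin k) ℝ) (x : EuclideanSpace ℝ (Fin k)) :
    mulE (A + C) x = mulE A x + mulE C x := by
  simp [mulE, map_add, LinearMap.add_apply]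

lemma subgrad_ne_top {n : ℕ} {g : EuclideanSpace ℝ (Fin n) → EReal}
    (hg : ProperER g) {y s : EuclideanSpace ℝ (Fin n)} (hs : IsSubgradAt g y s) :
    g y ≠ ⊤ := by
  obtain ⟨z, hz⟩ := hg.2
  intro h
  apply hz
  have := hs z
  rw [h, EReal.top_add_of_ne_bot (EReal.coe_ne_bot _)] at this
  exact top_le_iff.mp this

lemma subgrad_mono {n : ℕ} {g : EuclideanSpace ℝ (Fin n) → EReal} (hg : ProperER g)
    {y1 y2 s1 s2 : EuclideanSpace ℝ (Fin n)}
    (h1 : IsSubgradAt g y1 s1) (h2 : IsSubgradAt g y2 s2) :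
    0 ≤ ⟪s1 - s2, y1 - y2⟫ := by
  have ht1 := subgrad_ne_top hg h1
  have ht2 := subgrad_ne_top hg h2
  have hb1 := hg.1 y1
  have hb2 := hg.1 y2
  have e1 : g y1 = ((g y1).toReal : EReal) := (EReal.coe_toReal ht1 hb1).symm
  have e2 : g y2 = ((g y2).toReal : EReal) := (EReal.coe_toReal ht2 hb2).symm
  have k1 := h1 y2
  have k2 := h2 y1
  rw [e1, e2, ← EReal.coe_add, EReal.coe_le_coe_iff] at k1
  rw [e1, e2, ← EReal.coe_add, EReal.coe_le_coe_iff] at k2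
  have q1 : ⟪s1, y2 - y1⟫ = -⟪s1, y1 - y2⟫ := by
    rw [← inner_neg_right, neg_sub]
  have q2 : ⟪s1 - s2, y1 - y2⟫ = ⟪s1, y1 - y2⟫ - ⟪s2, y1 - y2⟫ := by
    rw [inner_sub_left]
  linarith

/-- uniqueness of the saddle point under Assumption A with `f2 = 0`,
`g1(y) = ½ yᵀPy + bᵀy`, `P ⪰ 0` symmetric and `BBᵀ + P ≻ 0`. -/
theorem pdpg_unique_solution {dx dy : ℕ} (μx Lx : ℝ) (hμx : 0 < μx) (hLx : μx ≤ Lx)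
    (f1 : EuclideanSpace ℝ (Fin dx) → ℝ)
    (f1' : EuclideanSpace ℝ (Fin dx) → EuclideanSpace ℝ (Fin dx))
    (hf1grad : ∀ x, HasGradientAt f1 (f1' x) x)
    (hf1sc : StrongConvex μx f1)
    (hf1sm : ∀ x x', ‖f1' x - f1' x'‖ ≤ Lx * ‖x - x'‖)
    (g2 : EuclideanSpace ℝ (Fin dy) → EReal)
    (hg2prop : ProperER g2) (hg2conv : ConvexER g2) (hg2lsc : LowerSemicontinuous g2)
    (B : Matrix (Fin dy) (Fin dx) ℝ) (b : EuclideanSpace ℝ (Fin dy))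
    (P : Matrix (Fin dy) (Fin dy) ℝ) (hP : P.PosSemidef)
    (hBP : (B * Bᵀ + P).PosDef)
    (xs xo : EuclideanSpace ℝ (Fin dx)) (ys yo : EuclideanSpace ℝ (Fin dy))
    (hxs : f1' xs + mulE Bᵀ ys = 0)
    (hys : IsSubgradAt g2 ys (mulE B xs - mulE P ys - b))
    (hxo : f1' xo + mulE Bᵀ yo = 0)
    (hyo : IsSubgradAt g2 yo (mulE B xo - mulE P yo - b)) :
    xs = xo ∧ ys = yo := by
  set Δx := xs - xo with hΔx
  set Δy := ys - yo with hΔy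
  -- gradient difference
  have hgd : f1' xs - f1' xo = -(mulE Bᵀ Δy) := by
    have hs' : f1' xs = -(mulE Bᵀ ys) := eq_neg_of_add_eq_zero_left hxs
    have ho' : f1' xo = -(mulE Bᵀ yo) := eq_neg_of_add_eq_zero_left hxo
    rw [hs', ho', hΔy, ← mulE_sub]
    abel
  -- subgradient monotonicity
  have hsg := subgrad_mono hg2prop hys hyo
  have hss : (mulE B xs - mulE P ys - b) - (mulE B xo - mulE P yo - b)
      = mulE B Δx - mulE P Δy := by
    rw [hΔx, hΔy, ← mulE_sub, ← mulE_sub]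
    abel
  rw [hss, inner_sub_left] at hsg
  -- positive semidefiniteness of P
  have hPn : 0 ≤ ⟪Δy, mulE P Δy⟫ := posSemidef_inner_nonneg hP Δy
  have hPn' : 0 ≤ ⟪mulE P Δy, Δy⟫ := by rwa [real_inner_comm]
  -- strong monotonicity of the gradient
  have hmono := strongconv_grad_mono hf1grad hf1sc xo xs
  rw [hgd] at hmono
  have hcross : ⟪-(mulE Bᵀ Δy), xs - xo⟫ = -⟪mulE B Δx, Δy⟫ := by
    rw [inner_neg_left, inner_mulE_left, real_inner_comm, hΔx]
  rw [hcross] at hmono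
  -- x-uniqueness
  have hxn : ‖xs - xo‖ ^ 2 ≤ 0 := by nlinarith
  have hxe : xs = xo := by
    have : ‖xs - xo‖ = 0 := by nlinarith [norm_nonneg (xs - xo), sq_nonneg ‖xs - xo‖]
    exact sub_eq_zero.mp (norm_eq_zero.mp this)
  refine ⟨hxe, ?_⟩
  -- now Δx = 0
  have hΔx0 : Δx = 0 := by rw [hΔx, hxe, sub_self]
  have hBx0 : mulE B Δx = 0 := by rw [hΔx0]; simp [mulE]
  rw [hBx0] at hsg
  simp only [inner_zero_left] at hsg
  have hPq : ⟪mulE P Δy, Δy⟫ = 0 := le_antisymm (by linarith) hPn'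
  -- Bᵀ Δy = 0
  have hBt : mulE Bᵀ Δy = 0 := by
    have : f1' xs - f1' xo = 0 := by rw [hxe, sub_self]
    rw [this] at hgd
    exact neg_eq_zero.mp hgd.symm
  -- conclude via positive definiteness
  have hPq2 : ⟪Δy, mulE P Δy⟫ = 0 := by rw [real_inner_comm]; exact hPq
  have hq : ⟪Δy, mulE (B * Bᵀ + P) Δy⟫ = 0 := by
    rw [mulE_add, mulE_mul, hBt, inner_add_right, hPq2]
    simp [mulE]
  have : Δy = 0 := posDef_eq_zero hBP Δy hq
  exact sub_eq_zero.mp this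
end

section
/- (Lemma 2(ii): dual strong convexity from full row rank.) Assume f1: ℝ^{dx} → ℝ is μx-strongly convex and Lx-smooth (Lx ≥ μx > 0), g1: ℝ^{dy} → ℝ is convex and differentiable, f2 = 0, and B ∈ ℝ^{dy×dx} has full row rank with smallest singular value σmin(B) > 0. For y ∈ ℝ^{dy}, let x*(y) denote the unique minimizer over x of f1(x) + ⟨Bᵀy, x⟩, and define G(y) = ∇g1(y) − B x*(y). Then ⟨G(y) − G(y'), y − y'⟩ ≥ (σmin(B)²/Lx)‖y − y'‖² for all y, y' ∈ ℝ^{dy} (i.e., the dual function φ is (σmin(B)²/Lx)-strongly convex). -/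
open scoped RealInnerProductSpace
open Matrix

/-- Smallest singular value of `B ∈ ℝ^{m×n}` (as a map `ℝⁿ → ℝᵐ`), i.e. the minimum of
`‖Bᵀv‖` over unit vectors `v ∈ ℝᵐ`; it is positive iff `B` has full row rank. -/
noncomputable def sigmaMin {m n : ℕ} (B : Matrix (Fin m) (Fin n) ℝ) : ℝ :=
  ⨅ v : Metric.sphere (0 : EuclideanSpace ℝ (Fin m)) 1,
    ‖mulE Bᵀ (v : EuclideanSpace ℝ (Fin m))‖

section Helpers
open scoped RealInnerProductSpace
open Set

variable {E : Type*} [NormedAddCommGroup E] [InnerProductSpace ℝ E] [CompleteSpace E]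



/-- derivative of t ↦ f (x + t • v). -/
lemma line_hasDerivAt {f : E → ℝ} {f' : E → E} (hf : ∀ p, HasGradientAt f (f' p) p)
    (x v : E) (t : ℝ) :
    HasDerivAt (fun s : ℝ => f (x + s • v)) ⟪f' (x + t • v), v⟫ t := by
  have hline : HasDerivAt (fun s : ℝ => x + s • v) v t := by
    simpa using ((hasDerivAt_id t).smul_const v).const_add x
  have := ((hf (x + t • v)).hasFDerivAt).comp_hasDerivAt t hline
  simpa [InnerProductSpace.toDual_apply_apply, Function.comp_def] using this

/-- First-order condition for convex differentiable functions. -/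
lemma first_order {f : E → ℝ} {f' : E → E} (hconv : ConvexOn ℝ univ f)
    (hf : ∀ p, HasGradientAt f (f' p) p) (x y : E) :
    f x + ⟪f' x, y - x⟫ ≤ f y := by
  set g : ℝ → ℝ := fun s => f (x + s • (y - x)) with hg
  have hgconv : ConvexOn ℝ univ g := by
    have := hconv.comp_affineMap (AffineMap.lineMap x y : ℝ →ᵃ[ℝ] E)
    simp only [preimage_univ] at this
    rw [show g = f ∘ ⇑(AffineMap.lineMap x y : ℝ →ᵃ[ℝ] E) from ?_]
    · exact this
    funext s
    simp [g, AffineMap.lineMap_apply, add_comm]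
  have hd : HasDerivAt g ⟪f' x, y - x⟫ 0 := by
    simpa using line_hasDerivAt hf x (y - x) 0
  have := hgconv.le_slope_of_hasDerivAt (mem_univ (0:ℝ)) (mem_univ (1:ℝ)) zero_lt_one hd
  have hslope : slope g 0 1 = f y - f x := by
    simp [slope, g]
  rw [hslope] at this
  linarith

/-- Descent lemma from Lipschitz gradient. -/
lemma descent {f : E → ℝ} {f' : E → E} {L : ℝ} (hL : 0 < L)
    (hf : ∀ p, HasGradientAt f (f' p) p)
    (hlip : ∀ a b, ‖f' a - f' b‖ ≤ L * ‖a - b‖) (x y : E) :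
    f y ≤ f x + ⟪f' x, y - x⟫ + L / 2 * ‖y - x‖ ^ 2 := by
  set v : E := y - x with hv
  set φ : ℝ → ℝ := fun t => f (x + t • v) - t * ⟪f' x, v⟫ - L * t ^ 2 / 2 * ‖v‖ ^ 2 with hφ
  have hder : ∀ t : ℝ, HasDerivAt φ
      (⟪f' (x + t • v), v⟫ - ⟪f' x, v⟫ - L * t * ‖v‖ ^ 2) t := by
    intro t
    have h1 := line_hasDerivAt hf x v t
    have h2 : HasDerivAt (fun t : ℝ => t * ⟪f' x, v⟫) ⟪f' x, v⟫ t := by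
      simpa using (hasDerivAt_id t).mul_const ⟪f' x, v⟫
    have h3 : HasDerivAt (fun t : ℝ => L * t ^ 2 / 2 * ‖v‖ ^ 2) (L * t * ‖v‖ ^ 2) t := by
      have : HasDerivAt (fun t : ℝ => t ^ 2) (2 * t) t := by
        simpa using hasDerivAt_pow 2 t
      have := (((this.const_mul L).div_const 2).mul_const (‖v‖ ^ 2))
      exact this.congr_deriv (by ring)
    exact (h1.sub h2).sub h3
  have hmono : AntitoneOn φ (Icc (0:ℝ) 1) := by
    apply antitoneOn_of_deriv_nonpos (convex_Icc 0 1)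
    · exact fun t _ => ((hder t).differentiableAt).continuousAt.continuousWithinAt
    · exact fun t _ => ((hder t).differentiableAt).differentiableWithinAt
    · intro t ht
      rw [interior_Icc] at ht
      rw [(hder t).deriv]
      have hb : ⟪f' (x + t • v) - f' x, v⟫ ≤ L * t * ‖v‖ ^ 2 := by
        calc ⟪f' (x + t • v) - f' x, v⟫ ≤ ‖f' (x + t • v) - f' x‖ * ‖v‖ :=
              real_inner_le_norm _ _
          _ ≤ (L * ‖(x + t • v) - x‖) * ‖v‖ := by
              have := hlip (x + t • v) x
              nlinarith [norm_nonneg v]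
          _ = L * t * ‖v‖ ^ 2 := by
              rw [add_sub_cancel_left, norm_smul, Real.norm_eq_abs,
                abs_of_pos ht.1]; ring
      rw [inner_sub_left] at hb
      linarith
  have h01 := hmono (left_mem_Icc.2 zero_le_one) (right_mem_Icc.2 zero_le_one) zero_le_one
  simp only [hφ, zero_smul, add_zero, one_smul, one_pow, zero_pow, mul_zero, zero_mul,
    mul_one, sub_zero, zero_div] at h01
  have hxy : x + v = y := by rw [hv]; abel
  rw [hxy] at h01
  linarith

lemma inner_hasGradientAt (c : E) (p : E) :
    HasGradientAt (fun z : E => ⟪c, z⟫) c p := by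
  have : HasFDerivAt (fun z : E => ⟪c, z⟫) (InnerProductSpace.toDual ℝ E c) p :=
    (InnerProductSpace.toDual ℝ E c).hasFDerivAt
  have h2 := this.hasGradientAt
  simpa using h2

/-- Cocoercivity of the gradient of a convex L-smooth function. -/
lemma cocoercive {f : E → ℝ} {f' : E → E} {L : ℝ} (hL : 0 < L)
    (hconv : ConvexOn ℝ univ f) (hf : ∀ p, HasGradientAt f (f' p) p)
    (hlip : ∀ a b, ‖f' a - f' b‖ ≤ L * ‖a - b‖) (x y : E) :
    (1 / L) * ‖f' y - f' x‖ ^ 2 ≤ ⟪f' y - f' x, y - x⟫ := by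
  -- key: one-sided bound
  have key : ∀ a b : E, f a + ⟪f' a, b - a⟫ + 1 / (2 * L) * ‖f' b - f' a‖ ^ 2 ≤ f b := by
    intro a b
    set h : E → ℝ := fun z => f z - ⟪f' a, z⟫ with hh
    set h' : E → E := fun z => f' z - f' a with hh'
    have hgrad : ∀ p, HasGradientAt h (h' p) p := by
      intro p
      have h1 := (hf p).hasFDerivAt.sub ((inner_hasGradientAt (f' a) p).hasFDerivAt)
      have h2 : HasFDerivAt h (InnerProductSpace.toDual ℝ E (h' p)) p := by
        simpa [hh, hh', map_sub, Pi.sub_def] using h1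
      simpa using h2.hasGradientAt
    have hlip' : ∀ c d, ‖h' c - h' d‖ ≤ L * ‖c - d‖ := by
      intro c d; simpa [hh'] using hlip c d
    have hmin : ∀ z, h a ≤ h z := by
      intro z
      have := first_order hconv hf a z
      simp only [hh, inner_sub_right] at this ⊢
      linarith
    set w : E := b - (1 / L) • (f' b - f' a) with hw
    have hd := descent hL hgrad hlip' b w
    have hwb : w - b = -((1 / L) • (f' b - f' a)) := by rw [hw]; abel
    have hinner : ⟪h' b, w - b⟫ = -(1/L) * ‖f' b - f' a‖ ^ 2 := by
      rw [hwb, inner_neg_right, real_inner_smul_right, hh']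
      rw [real_inner_self_eq_norm_sq]
      ring
    have hnorm : ‖w - b‖ ^ 2 = (1/L)^2 * ‖f' b - f' a‖ ^ 2 := by
      rw [hwb, norm_neg, norm_smul, Real.norm_eq_abs, abs_of_pos (by positivity), mul_pow]
    rw [hinner, hnorm] at hd
    have h1 : h a ≤ h w := hmin w
    have hLne : L ≠ 0 := ne_of_gt hL
    have hcalc : h b + -(1/L) * ‖f' b - f' a‖ ^ 2 + L / 2 * ((1/L)^2 * ‖f' b - f' a‖ ^ 2)
        = h b - 1/(2*L) * ‖f' b - f' a‖ ^ 2 := by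
      field_simp; ring
    rw [hcalc] at hd
    have : h a ≤ h b - 1/(2*L) * ‖f' b - f' a‖ ^ 2 := le_trans h1 hd
    simp only [hh] at this
    have hib : ⟪f' a, b⟫ - ⟪f' a, a⟫ = ⟪f' a, b - a⟫ := by rw [inner_sub_right]
    linarith
  have k1 := key x y
  have k2 := key y x
  have hsym : ‖f' x - f' y‖ = ‖f' y - f' x‖ := norm_sub_rev _ _
  rw [hsym] at k2
  have hi : ⟪f' x, y - x⟫ + ⟪f' y, x - y⟫ = -⟪f' y - f' x, y - x⟫ := by
    have : x - y = -(y - x) := by abel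
    rw [this, inner_neg_right, inner_sub_left]; ring
  have hs : 1/(2*L) * ‖f' y - f' x‖ ^ 2 + 1/(2*L) * ‖f' y - f' x‖ ^ 2
      = 1/L * ‖f' y - f' x‖ ^ 2 := by field_simp; ring
  linarith [k1, k2, hi, hs]

lemma convexOn_normSq' : ConvexOn ℝ univ (fun x : E => ‖x‖ ^ 2) := by
  refine ⟨convex_univ, ?_⟩
  intro x _ y _ a b ha hb hab
  have h1 : ‖a • x + b • y‖ ≤ a * ‖x‖ + b * ‖y‖ := by
    calc ‖a • x + b • y‖ ≤ ‖a • x‖ + ‖b • y‖ := norm_add_le _ _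
      _ = a * ‖x‖ + b * ‖y‖ := by
          rw [norm_smul, norm_smul, Real.norm_eq_abs, Real.norm_eq_abs,
            abs_of_nonneg ha, abs_of_nonneg hb]
  have h2 : ‖a • x + b • y‖ ^ 2 ≤ (a * ‖x‖ + b * ‖y‖) ^ 2 := by
    apply sq_le_sq' _ h1
    have := norm_nonneg (a • x + b • y)
    nlinarith [norm_nonneg x, norm_nonneg y]
  have h3 : (a * ‖x‖ + b * ‖y‖) ^ 2 ≤ a * ‖x‖ ^ 2 + b * ‖y‖ ^ 2 := by
    nlinarith [mul_nonneg ha hb, sq_nonneg (‖x‖ - ‖y‖)]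
  simp only [smul_eq_mul]
  linarith

end Helpers

section MatrixHelpers
open scoped RealInnerProductSpace
open Matrix

lemma mulE_adjoint {m n : ℕ} (B : Matrix (Fin m) (Fin n) ℝ)
    (y : EuclideanSpace ℝ (Fin m)) (x : EuclideanSpace ℝ (Fin n)) :
    ⟪mulE Bᵀ y, x⟫ = ⟪y, mulE B x⟫ := by
  have h : (Bᵀ) = Bᴴ := (Matrix.conjTranspose_eq_transpose_of_trivial B).symm
  rw [mulE, h, Matrix.toEuclideanLin_conjTranspose_eq_adjoint]
  exact LinearMap.adjoint_inner_left _ _ _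

lemma sigmaMin_mul_norm_le {m n : ℕ} (B : Matrix (Fin m) (Fin n) ℝ)
    (v : EuclideanSpace ℝ (Fin m)) : sigmaMin B * ‖v‖ ≤ ‖mulE Bᵀ v‖ := by
  rcases eq_or_ne v 0 with rfl | hv
  · simp [mulE]
  · have hnv : 0 < ‖v‖ := norm_pos_iff.mpr hv
    set u : EuclideanSpace ℝ (Fin m) := ‖v‖⁻¹ • v with hu_def
    have hu : ‖u‖ = 1 := by
      rw [hu_def, norm_smul, Real.norm_eq_abs, abs_of_pos (by positivity)]
      field_simp
    have humem : u ∈ Metric.sphere (0 : EuclideanSpace ℝ (Fin m)) 1 := by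
      simpa [mem_sphere_iff_norm] using hu
    have hbdd : BddBelow (Set.range fun w : Metric.sphere (0 : EuclideanSpace ℝ (Fin m)) 1 =>
        ‖mulE Bᵀ (w : EuclideanSpace ℝ (Fin m))‖) := by
      refine ⟨0, ?_⟩
      rintro _ ⟨w, rfl⟩
      exact norm_nonneg _
    have hle : sigmaMin B ≤ ‖mulE Bᵀ u‖ := ciInf_le hbdd ⟨u, humem⟩
    have heq : ‖mulE Bᵀ u‖ = ‖v‖⁻¹ * ‖mulE Bᵀ v‖ := by
      have : mulE Bᵀ u = ‖v‖⁻¹ • mulE Bᵀ v := by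
        simp [mulE, hu_def, _root_.map_smul]
      rw [this, norm_smul, Real.norm_eq_abs, abs_of_pos (by positivity)]
    rw [heq] at hle
    have := mul_le_mul_of_nonneg_right hle hnv.le
    calc sigmaMin B * ‖v‖ ≤ ‖v‖⁻¹ * ‖mulE Bᵀ v‖ * ‖v‖ := this
      _ = ‖mulE Bᵀ v‖ := by field_simp

end MatrixHelpers

/-- Lemma 2(ii): dual strong convexity from full row rank. -/
theorem dual_strongly_monotone_of_full_row_rank {dx dy : ℕ} (μx Lx : ℝ)
    (hμx : 0 < μx) (hLx : μx ≤ Lx)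
    (f1 : EuclideanSpace ℝ (Fin dx) → ℝ)
    (f1' : EuclideanSpace ℝ (Fin dx) → EuclideanSpace ℝ (Fin dx))
    (hf1grad : ∀ x, HasGradientAt f1 (f1' x) x)
    (hf1sc : StrongConvex μx f1)
    (hf1sm : ∀ x x', ‖f1' x - f1' x'‖ ≤ Lx * ‖x - x'‖)
    (g1 : EuclideanSpace ℝ (Fin dy) → ℝ)
    (g1' : EuclideanSpace ℝ (Fin dy) → EuclideanSpace ℝ (Fin dy))
    (hg1grad : ∀ y, HasGradientAt g1 (g1' y) y)
    (hg1conv : ConvexOn ℝ Set.univ g1)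
    (B : Matrix (Fin dy) (Fin dx) ℝ)
    (hrank : 0 < sigmaMin B)
    (xstar : EuclideanSpace ℝ (Fin dy) → EuclideanSpace ℝ (Fin dx))
    (hxstar : ∀ y x, f1 (xstar y) + ⟪mulE Bᵀ y, xstar y⟫ ≤ f1 x + ⟪mulE Bᵀ y, x⟫) :
    ∀ y y' : EuclideanSpace ℝ (Fin dy),
      (sigmaMin B ^ 2 / Lx) * ‖y - y'‖ ^ 2 ≤
        ⟪(g1' y - mulE B (xstar y)) - (g1' y' - mulE B (xstar y')), y - y'⟫ := by
  classical
  have hLpos : 0 < Lx := lt_of_lt_of_le hμx hLx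
  -- f1 is convex
  have hf1conv : ConvexOn ℝ Set.univ f1 := by
    have h2 := hf1sc.add ((convexOn_normSq' (E := EuclideanSpace ℝ (Fin dx))).smul
      (by positivity : (0:ℝ) ≤ μx / 2))
    have : (fun x => (f1 x - μx / 2 * ‖x‖ ^ 2) + (μx / 2) • ‖x‖ ^ 2) = f1 := by
      funext x; simp only [smul_eq_mul]; ring
    have h2' : ConvexOn ℝ Set.univ
        (fun x => (f1 x - μx / 2 * ‖x‖ ^ 2) + (μx / 2) • ‖x‖ ^ 2) := h2
    rwa [this] at h2'
  -- stationarity : f1' (xstar z) = - mulE Bᵀ z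
  have hstat : ∀ z : EuclideanSpace ℝ (Fin dy), f1' (xstar z) = -(mulE Bᵀ z) := by
    intro z
    set c : EuclideanSpace ℝ (Fin dx) := mulE Bᵀ z with hc
    set F : EuclideanSpace ℝ (Fin dx) → ℝ := fun x => f1 x + ⟪c, x⟫ with hF
    have hgrad : HasFDerivAt F
        (InnerProductSpace.toDual ℝ _ (f1' (xstar z) + c)) (xstar z) := by
      have h1 := (hf1grad (xstar z)).hasFDerivAt.add
        ((inner_hasGradientAt c (xstar z)).hasFDerivAt)
      simpa [hF, map_add, Pi.add_def] using h1
    have hmin : IsLocalMin F (xstar z) :=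
      Filter.Eventually.of_forall (fun w => hxstar z w)
    have hzero := hmin.hasFDerivAt_eq_zero hgrad
    have : f1' (xstar z) + c = 0 := by
      have := congrArg (InnerProductSpace.toDual ℝ (EuclideanSpace ℝ (Fin dx))).symm hzero
      simpa using this
    linear_combination (norm := module) this
  intro y y'
  set u := xstar y with hu
  set u' := xstar y' with hu'
  set d := y - y' with hd
  -- monotone gradient of g1
  have hmono : 0 ≤ ⟪g1' y - g1' y', d⟫ := by
    have ha := first_order hg1conv hg1grad y y'
    have hb := first_order hg1conv hg1grad y' y
    have hsum : ⟪g1' y, y' - y⟫ + ⟪g1' y', y - y'⟫ ≤ 0 := by linarith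
    have hexp : ⟪g1' y - g1' y', d⟫ = -(⟪g1' y, y' - y⟫ + ⟪g1' y', y - y'⟫) := by
      rw [hd, inner_sub_left]
      have : (y' - y : EuclideanSpace ℝ (Fin dy)) = -(y - y') := by abel
      rw [this, inner_neg_right]
      ring
    rw [hexp]
    linarith
  -- cocoercivity term
  have hco := cocoercive hLpos hf1conv hf1grad hf1sm u u'
  have hBt : mulE Bᵀ d = f1' u' - f1' u := by
    have : mulE Bᵀ d = mulE Bᵀ y - mulE Bᵀ y' := by
      simp [mulE, hd, map_sub]
    rw [this, hu, hu', hstat y, hstat y']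
    abel
  have hkey : (sigmaMin B ^ 2 / Lx) * ‖d‖ ^ 2 ≤ ⟪mulE B u' - mulE B u, d⟫ := by
    have h1 : ⟪mulE B u' - mulE B u, d⟫ = ⟪f1' u' - f1' u, u' - u⟫ := by
      have hsub : mulE B u' - mulE B u = mulE B (u' - u) := by
        simp [mulE, map_sub]
      rw [hsub, real_inner_comm, ← mulE_adjoint, hBt]
    have h2 : (1 / Lx) * ‖f1' u' - f1' u‖ ^ 2 ≤ ⟪f1' u' - f1' u, u' - u⟫ := hco
    have h3 : (sigmaMin B * ‖d‖) ^ 2 ≤ ‖f1' u' - f1' u‖ ^ 2 := by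
      rw [← hBt]
      have hnn : 0 ≤ sigmaMin B * ‖d‖ :=
        mul_nonneg (le_of_lt hrank) (norm_nonneg _)
      exact pow_le_pow_left₀ hnn (sigmaMin_mul_norm_le B d) 2
    have h4 : (sigmaMin B ^ 2 / Lx) * ‖d‖ ^ 2 ≤ (1 / Lx) * ‖f1' u' - f1' u‖ ^ 2 := by
      have : (sigmaMin B ^ 2 / Lx) * ‖d‖ ^ 2 = (1 / Lx) * (sigmaMin B * ‖d‖) ^ 2 := by
        field_simp
      rw [this]
      apply mul_le_mul_of_nonneg_left h3 (by positivity)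
    rw [h1]
    linarith
  have hsplit : ⟪(g1' y - mulE B (xstar y)) - (g1' y' - mulE B (xstar y')), d⟫
      = ⟪g1' y - g1' y', d⟫ + ⟪mulE B u' - mulE B u, d⟫ := by
    rw [← hu, ← hu', ← inner_add_left]
    congr 1
    abel
  rw [hsplit]
  linarith
end

section
/- (Lemma 2(iii): restricted dual strong convexity in the linear case.) Assume f1: ℝ^{dx} → ℝ is μx-strongly convex and Lx-smooth (Lx ≥ μx > 0), f2 = 0, and g1(y) = bᵀy is linear. For y ∈ ℝ^{dy}, let x*(y) denote the unique minimizer over x of f1(x) + ⟨Bᵀy, x⟩, and let σ̃min(B) denote the smallest nonzero singular value of B ≠ 0. Then for all y, y' ∈ ℝ^{dy} with y − y' ∈ Range(B): ⟨B x*(y') − B x*(y), y − y'⟩ ≥ (σ̃min(B)²/Lx)‖y − y'‖² (i.e., the dual function φ(y) = bᵀy + f1*(−Bᵀy) is (σ̃min(B)²/Lx)-strongly convex on Range(B)). -/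
open scoped RealInnerProductSpace
open Matrix

/-- Smallest nonzero singular value of a nonzero matrix `B`: the minimum of `‖Bᵀv‖` over
unit vectors `v` in the range of `B`. -/
noncomputable def sigmaMinNZ {m n : ℕ} (B : Matrix (Fin m) (Fin n) ℝ) : ℝ :=
  ⨅ v : {v : EuclideanSpace ℝ (Fin m) //
      v ∈ LinearMap.range (Matrix.toEuclideanLin B) ∧ ‖v‖ = 1},
    ‖mulE Bᵀ (v : EuclideanSpace ℝ (Fin m))‖


section Aux

open Set Filter Topology

variable {n : ℕ}

private lemma hasGradientAt_inner_const (c x : EuclideanSpace ℝ (Fin n)) :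
    HasGradientAt (fun z : EuclideanSpace ℝ (Fin n) => ⟪c, z⟫) c x := by
  rw [hasGradientAt_iff_hasFDerivAt]
  exact (InnerProductSpace.toDual ℝ (EuclideanSpace ℝ (Fin n)) c).hasFDerivAt

private lemma HasGradientAt.add' {f g : EuclideanSpace ℝ (Fin n) → ℝ}
    {f' g' x : EuclideanSpace ℝ (Fin n)} (hf : HasGradientAt f f' x)
    (hg : HasGradientAt g g' x) : HasGradientAt (fun z => f z + g z) (f' + g') x := by
  rw [hasGradientAt_iff_hasFDerivAt] at *
  rw [map_add]
  exact hf.add hg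

private lemma curve_hasDerivAt (x v : EuclideanSpace ℝ (Fin n)) (t : ℝ) :
    HasDerivAt (fun t : ℝ => x + t • v) v t := by
  simpa using ((hasDerivAt_id t).smul_const v).const_add x

/-- first-order condition for a convex differentiable function -/
private lemma convex_first_order {f : EuclideanSpace ℝ (Fin n) → ℝ}
    {g x : EuclideanSpace ℝ (Fin n)} (hf : ConvexOn ℝ Set.univ f)
    (hg : HasGradientAt f g x) (z : EuclideanSpace ℝ (Fin n)) : f x + ⟪g, z - x⟫ ≤ f z := by
  set F : ℝ → ℝ := fun t => f (x + t • (z - x)) with hF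
  have hder : HasDerivAt F ⟪g, z - x⟫ 0 := by
    have hfd : HasFDerivAt f ((InnerProductSpace.toDual ℝ (EuclideanSpace ℝ (Fin n))) g)
        (x + (0:ℝ) • (z - x)) := by
      simpa using hg.hasFDerivAt
    have h1 := hfd.comp_hasDerivAt (0:ℝ) (curve_hasDerivAt x (z - x) 0)
    rw [InnerProductSpace.toDual_apply_apply] at h1
    exact h1
  have hslope : Filter.Tendsto (slope F 0) (𝓝[>] 0) (𝓝 ⟪g, z - x⟫) :=
    (hasDerivAt_iff_tendsto_slope.1 hder).mono_left
      (nhdsWithin_mono 0 (by intro t ht; exact ne_of_gt ht))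
  have hkey : ⟪g, z - x⟫ ≤ f z - f x := by
    refine le_of_tendsto hslope ?_
    filter_upwards [Ioc_mem_nhdsGT (by norm_num : (0:ℝ) < 1)] with t ht
    have hconv := hf.2 (Set.mem_univ x) (Set.mem_univ z) (by linarith [ht.2] : (0:ℝ) ≤ 1 - t)
      ht.1.le (by ring)
    have hxe : x + t • (z - x) = (1 - t) • x + t • z := by module
    have h2 : F t ≤ (1 - t) * f x + t * f z := by rw [hF]; simpa [hxe] using hconv
    have hF0 : F 0 = f x := by simp [hF]
    have : slope F 0 t = (F t - F 0) / t := by rw [slope_def_field]; ring_nf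
    rw [this, div_le_iff₀ ht.1]
    nlinarith [ht.1]
  linarith [hkey]

private lemma inner_convexOn (c : EuclideanSpace ℝ (Fin n)) :
    ConvexOn ℝ Set.univ (fun x : EuclideanSpace ℝ (Fin n) => ⟪c, x⟫) := by
  refine ⟨convex_univ, ?_⟩
  intro x _ y _ a b _ _ _
  simp only [smul_eq_mul]
  rw [inner_add_right, real_inner_smul_right, real_inner_smul_right]

private lemma descent_lemma {f : EuclideanSpace ℝ (Fin n) → ℝ}
    {f' : EuclideanSpace ℝ (Fin n) → EuclideanSpace ℝ (Fin n)} {L : ℝ} (hL : 0 < L)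
    (hgrad : ∀ x, HasGradientAt f (f' x) x)
    (hlip : ∀ a b, ‖f' a - f' b‖ ≤ L * ‖a - b‖) (x z : EuclideanSpace ℝ (Fin n)) :
    f z ≤ f x + ⟪f' x, z - x⟫ + L / 2 * ‖z - x‖ ^ 2 := by
  set v := z - x with hv
  set G : ℝ → ℝ := fun t => f (x + t • v) - t * ⟪f' x, v⟫ - L / 2 * ‖v‖ ^ 2 * t ^ 2 with hG
  have hder : ∀ t : ℝ, HasDerivAt G (⟪f' (x + t • v), v⟫ - ⟪f' x, v⟫ - L * ‖v‖ ^ 2 * t) t := by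
    intro t
    have h1 : HasDerivAt (fun t : ℝ => f (x + t • v)) ⟪f' (x + t • v), v⟫ t := by
      have hfd := (hgrad (x + t • v)).hasFDerivAt
      have := hfd.comp_hasDerivAt t (curve_hasDerivAt x v t)
      rw [InnerProductSpace.toDual_apply_apply] at this
      exact this
    have h2 : HasDerivAt (fun t : ℝ => t * ⟪f' x, v⟫) ⟪f' x, v⟫ t := by
      simpa using (hasDerivAt_id t).mul_const (⟪f' x, v⟫ : ℝ)
    have h3 : HasDerivAt (fun t : ℝ => L / 2 * ‖v‖ ^ 2 * t ^ 2) (L * ‖v‖ ^ 2 * t) t := by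
      have := (hasDerivAt_pow 2 t).const_mul (L / 2 * ‖v‖ ^ 2)
      exact this.congr_deriv (by rw [show (2:ℕ) - 1 = 1 from rfl, pow_one]; push_cast; ring)
    exact (h1.sub h2).sub h3
  have hanti : AntitoneOn G (Icc 0 1) := by
    apply antitoneOn_of_deriv_nonpos (convex_Icc 0 1)
    · exact fun t _ => (hder t).differentiableAt.continuousAt.continuousWithinAt
    · intro t _
      exact (hder t).differentiableAt.differentiableWithinAt
    · intro t ht
      rw [interior_Icc] at ht
      rw [(hder t).deriv]
      have hb : ⟪f' (x + t • v) - f' x, v⟫ ≤ L * t * ‖v‖ ^ 2 := by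
        calc ⟪f' (x + t • v) - f' x, v⟫ ≤ ‖f' (x + t • v) - f' x‖ * ‖v‖ :=
              real_inner_le_norm _ _
          _ ≤ (L * ‖(x + t • v) - x‖) * ‖v‖ :=
              mul_le_mul_of_nonneg_right (hlip _ _) (norm_nonneg v)
          _ = L * t * ‖v‖ ^ 2 := by
              have : x + t • v - x = t • v := by abel
              rw [this, norm_smul, Real.norm_eq_abs, abs_of_pos ht.1]
              ring
      have hexp : (⟪f' (x + t • v), v⟫ : ℝ) - ⟪f' x, v⟫ = ⟪f' (x + t • v) - f' x, v⟫ := by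
        rw [inner_sub_left]
      rw [hexp]
      nlinarith [hb]
  have h01 := hanti ⟨le_refl 0, zero_le_one⟩ ⟨zero_le_one, le_refl 1⟩ zero_le_one
  have hG0 : G 0 = f x := by simp [hG]
  have hG1 : G 1 = f z - ⟪f' x, v⟫ - L / 2 * ‖v‖ ^ 2 := by
    have hz : x + (1:ℝ) • v = z := by rw [hv]; module
    show f (x + (1:ℝ) • v) - 1 * ⟪f' x, v⟫ - L / 2 * ‖v‖ ^ 2 * 1 ^ 2 = _
    rw [hz]; ring
  rw [hG0, hG1] at h01
  linarith

private lemma cocoercivity {f : EuclideanSpace ℝ (Fin n) → ℝ}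
    {f' : EuclideanSpace ℝ (Fin n) → EuclideanSpace ℝ (Fin n)} {L : ℝ} (hL : 0 < L)
    (hconv : ConvexOn ℝ Set.univ f)
    (hgrad : ∀ x, HasGradientAt f (f' x) x)
    (hlip : ∀ a b, ‖f' a - f' b‖ ≤ L * ‖a - b‖) (u v : EuclideanSpace ℝ (Fin n)) :
    ‖f' u - f' v‖ ^ 2 ≤ L * ⟪f' u - f' v, u - v⟫ := by
  have half : ∀ u v : EuclideanSpace ℝ (Fin n),
      f v - ⟪f' v, v⟫ + 1 / (2 * L) * ‖f' u - f' v‖ ^ 2 ≤ f u - ⟪f' v, u⟫ := by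
    intro u v
    set φ : EuclideanSpace ℝ (Fin n) → ℝ := fun x => f x + ⟪-f' v, x⟫ with hφ
    have φconv : ConvexOn ℝ Set.univ φ := hconv.add (inner_convexOn (-f' v))
    have φgrad : ∀ x, HasGradientAt φ (f' x - f' v) x := by
      intro x
      rw [sub_eq_add_neg]
      exact (hgrad x).add' (hasGradientAt_inner_const (-f' v) x)
    have φlip : ∀ a b, ‖(f' a - f' v) - (f' b - f' v)‖ ≤ L * ‖a - b‖ := by
      intro a b
      simpa using hlip a b
    set g := f' u - f' v with hg
    set w := u - (1 / L) • g with hw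
    have hmin : φ v ≤ φ w := by
      have := convex_first_order φconv (φgrad v) w
      simpa using this
    have hdesc : φ w ≤ φ u + ⟪f' u - f' v, w - u⟫ + L / 2 * ‖w - u‖ ^ 2 := by
      have hder2 : ∀ x, HasGradientAt φ ((fun x => f' x - f' v) x) x := φgrad
      exact descent_lemma hL hder2 φlip u w
    have hwu : w - u = -((1 / L) • g) := by rw [hw]; abel
    have hinner : (⟪f' u - f' v, w - u⟫ : ℝ) = -(1 / L) * ‖g‖ ^ 2 := by
      rw [hwu, ← hg, inner_neg_right, real_inner_smul_right, real_inner_self_eq_norm_sq]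
      ring
    have hnorm : ‖w - u‖ ^ 2 = (1 / L) ^ 2 * ‖g‖ ^ 2 := by
      rw [hwu, norm_neg, norm_smul, Real.norm_eq_abs, abs_of_pos (by positivity : (0:ℝ) < 1 / L)]
      ring
    have key : φ v ≤ φ u - 1 / (2 * L) * ‖g‖ ^ 2 := by
      have h := hmin.trans hdesc
      rw [hinner, hnorm] at h
      have harith : φ u + -(1 / L) * ‖g‖ ^ 2 + L / 2 * ((1 / L) ^ 2 * ‖g‖ ^ 2)
          = φ u - 1 / (2 * L) * ‖g‖ ^ 2 := by
        field_simp
        ring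
      linarith [h, harith]
    have hφv : φ v = f v - ⟪f' v, v⟫ := by simp [hφ, inner_neg_left]; ring
    have hφu : φ u = f u - ⟪f' v, u⟫ := by simp [hφ, inner_neg_left]; ring
    rw [hφv, hφu] at key
    linarith
  have h1 := half u v
  have h2 := half v u
  rw [norm_sub_rev (f' v) (f' u)] at h2
  have expand : (⟪f' u - f' v, u - v⟫ : ℝ)
      = ⟪f' u, u⟫ - ⟪f' u, v⟫ - ⟪f' v, u⟫ + ⟪f' v, v⟫ := by
    rw [inner_sub_left, inner_sub_right, inner_sub_right]
    ring
  have hLne : L ≠ 0 := ne_of_gt hL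
  rw [expand]
  have h3 : 1 / L * ‖f' u - f' v‖ ^ 2 ≤ ⟪f' u, u⟫ - ⟪f' u, v⟫ - ⟪f' v, u⟫ + ⟪f' v, v⟫ := by
    have : 1 / (2 * L) * ‖f' u - f' v‖ ^ 2 + 1 / (2 * L) * ‖f' u - f' v‖ ^ 2
        = 1 / L * ‖f' u - f' v‖ ^ 2 := by field_simp; ring
    linarith
  have hmul := mul_le_mul_of_nonneg_left h3 hL.le
  calc ‖f' u - f' v‖ ^ 2 = L * (1 / L * ‖f' u - f' v‖ ^ 2) := by field_simp
    _ ≤ L * (⟪f' u, u⟫ - ⟪f' u, v⟫ - ⟪f' v, u⟫ + ⟪f' v, v⟫) := hmul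

private lemma convexOn_half_normsq (μ : ℝ) (hμ : 0 ≤ μ) :
    ConvexOn ℝ Set.univ (fun x : EuclideanSpace ℝ (Fin n) => μ / 2 * ‖x‖ ^ 2) := by
  refine ⟨convex_univ, ?_⟩
  intro x _ y _ a b ha hb hab
  simp only [smul_eq_mul]
  have hxy : ‖a • x + b • y‖ ^ 2
      = a ^ 2 * ‖x‖ ^ 2 + 2 * (a * b) * ⟪x, y⟫ + b ^ 2 * ‖y‖ ^ 2 := by
    rw [@norm_add_sq_real, norm_smul, norm_smul, real_inner_smul_left, real_inner_smul_right,
      Real.norm_eq_abs, Real.norm_eq_abs, abs_of_nonneg ha, abs_of_nonneg hb]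
    ring
  have h2 : ‖a • x + b • y‖ ^ 2 ≤ a * ‖x‖ ^ 2 + b * ‖y‖ ^ 2 := by
    rw [hxy]
    nlinarith [real_inner_le_norm x y, mul_nonneg (mul_nonneg ha hb) (sq_nonneg (‖x‖ - ‖y‖)),
      mul_le_mul_of_nonneg_left (real_inner_le_norm x y) (mul_nonneg ha hb)]
  nlinarith [mul_le_mul_of_nonneg_left h2 (by positivity : (0:ℝ) ≤ μ / 2)]

private lemma sigmaMinNZ_nonneg {m n : ℕ} (B : Matrix (Fin m) (Fin n) ℝ) : 0 ≤ sigmaMinNZ B :=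
  Real.iInf_nonneg fun _ => norm_nonneg _

private lemma sigmaMinNZ_mul_norm_le {m n : ℕ} (B : Matrix (Fin m) (Fin n) ℝ)
    {v : EuclideanSpace ℝ (Fin m)} (hv : v ∈ LinearMap.range (Matrix.toEuclideanLin B)) :
    sigmaMinNZ B * ‖v‖ ≤ ‖mulE Bᵀ v‖ := by
  rcases eq_or_ne v 0 with rfl | hv0
  · simp
  · set u : EuclideanSpace ℝ (Fin m) := ‖v‖⁻¹ • v with hu
    have hu1 : ‖u‖ = 1 := by
      rw [hu, norm_smul, Real.norm_eq_abs, abs_of_nonneg (by positivity), inv_mul_cancel₀]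
      exact norm_ne_zero_iff.2 hv0
    have hur : u ∈ LinearMap.range (Matrix.toEuclideanLin B) :=
      Submodule.smul_mem _ _ hv
    have hle : sigmaMinNZ B ≤ ‖mulE Bᵀ u‖ := by
      apply ciInf_le _ (⟨u, hur, hu1⟩ : {v : EuclideanSpace ℝ (Fin m) //
        v ∈ LinearMap.range (Matrix.toEuclideanLin B) ∧ ‖v‖ = 1})
      exact ⟨0, by rintro r ⟨i, rfl⟩; exact norm_nonneg _⟩
    have heq : ‖mulE Bᵀ u‖ = ‖v‖⁻¹ * ‖mulE Bᵀ v‖ := by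
      rw [hu]
      show ‖Matrix.toEuclideanLin Bᵀ (‖v‖⁻¹ • v)‖ = _
      rw [_root_.map_smul, norm_smul, Real.norm_eq_abs, abs_of_nonneg (by positivity)]
      rfl
    calc sigmaMinNZ B * ‖v‖ ≤ (‖v‖⁻¹ * ‖mulE Bᵀ v‖) * ‖v‖ := by
          apply mul_le_mul_of_nonneg_right _ (norm_nonneg v)
          rw [← heq]; exact hle
      _ = ‖mulE Bᵀ v‖ := by
          have : (0:ℝ) < ‖v‖ := norm_pos_iff.2 hv0
          field_simp

private lemma inner_mulE_transpose {m n : ℕ} (B : Matrix (Fin m) (Fin n) ℝ)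
    (w : EuclideanSpace ℝ (Fin m)) (x : EuclideanSpace ℝ (Fin n)) :
    ⟪mulE Bᵀ w, x⟫ = ⟪w, mulE B x⟫ := by
  have h : (Bᵀ : Matrix (Fin n) (Fin m) ℝ) = Bᴴ :=
    (Matrix.conjTranspose_eq_transpose_of_trivial B).symm
  show ⟪Matrix.toEuclideanLin Bᵀ w, x⟫ = ⟪w, Matrix.toEuclideanLin B x⟫
  rw [h, Matrix.toEuclideanLin_conjTranspose_eq_adjoint, LinearMap.adjoint_inner_left]

end Aux

/-- Lemma 2(iii): restricted dual strong convexity in the linear case. -/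
theorem dual_restricted_strongly_monotone_linear_case {dx dy : ℕ} (μx Lx : ℝ)
    (hμx : 0 < μx) (hLx : μx ≤ Lx)
    (f1 : EuclideanSpace ℝ (Fin dx) → ℝ)
    (f1' : EuclideanSpace ℝ (Fin dx) → EuclideanSpace ℝ (Fin dx))
    (hf1grad : ∀ x, HasGradientAt f1 (f1' x) x)
    (hf1sc : StrongConvex μx f1)
    (hf1sm : ∀ x x', ‖f1' x - f1' x'‖ ≤ Lx * ‖x - x'‖)
    (b : EuclideanSpace ℝ (Fin dy))
    (B : Matrix (Fin dy) (Fin dx) ℝ) (hB : B ≠ 0)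
    (xstar : EuclideanSpace ℝ (Fin dy) → EuclideanSpace ℝ (Fin dx))
    (hxstar : ∀ y x, f1 (xstar y) + ⟪mulE Bᵀ y, xstar y⟫ ≤ f1 x + ⟪mulE Bᵀ y, x⟫) :
    ∀ y y' : EuclideanSpace ℝ (Fin dy),
      y - y' ∈ LinearMap.range (Matrix.toEuclideanLin B) →
      (sigmaMinNZ B ^ 2 / Lx) * ‖y - y'‖ ^ 2 ≤
        ⟪mulE B (xstar y') - mulE B (xstar y), y - y'⟫ := by
  
  intro y y' hrange
  have hLpos : 0 < Lx := lt_of_lt_of_le hμx hLx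
  -- convexity of f1
  have hconv : ConvexOn ℝ Set.univ f1 := by
    have h1 : ConvexOn ℝ Set.univ (fun x => f1 x - μx / 2 * ‖x‖ ^ 2) := hf1sc
    have key := h1.add (convexOn_half_normsq μx hμx.le)
    have heq : ((fun x => f1 x - μx / 2 * ‖x‖ ^ 2)
        + fun x : EuclideanSpace ℝ (Fin dx) => μx / 2 * ‖x‖ ^ 2) = f1 := by
      funext x
      simp only [Pi.add_apply]
      ring
    rwa [heq] at key
  -- gradient stationarity
  have hstat : ∀ w : EuclideanSpace ℝ (Fin dy), f1' (xstar w) = -(mulE Bᵀ w) := by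
    intro w
    have hFg : HasGradientAt (fun x => f1 x + ⟪mulE Bᵀ w, x⟫)
        (f1' (xstar w) + mulE Bᵀ w) (xstar w) :=
      (hf1grad _).add' (hasGradientAt_inner_const _ _)
    have hmin : IsLocalMin (fun x => f1 x + ⟪mulE Bᵀ w, x⟫) (xstar w) :=
      Filter.Eventually.of_forall (hxstar w)
    have h0 := hmin.hasFDerivAt_eq_zero hFg.hasFDerivAt
    have h1 : f1' (xstar w) + mulE Bᵀ w = 0 := by
      apply (InnerProductSpace.toDual ℝ (EuclideanSpace ℝ (Fin dx))).injective
      rw [h0, map_zero]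
    exact eq_neg_of_add_eq_zero_left h1
  set u := xstar y with hu
  set v := xstar y' with hv
  have hco := cocoercivity hLpos hconv hf1grad hf1sm u v
  have hgd : f1' u - f1' v = mulE Bᵀ (y' - y) := by
    rw [hu, hv, hstat y, hstat y']
    have h2 : mulE Bᵀ (y' - y) = mulE Bᵀ y' - mulE Bᵀ y :=
      map_sub (Matrix.toEuclideanLin Bᵀ) _ _
    rw [h2]
    abel
  rw [hgd] at hco
  have hadj : (⟪mulE Bᵀ (y' - y), u - v⟫ : ℝ) = ⟪mulE B v - mulE B u, y - y'⟫ := by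
    rw [inner_mulE_transpose]
    have h2 : mulE B (u - v) = mulE B u - mulE B v := map_sub (Matrix.toEuclideanLin B) _ _
    rw [h2, real_inner_comm,
      show mulE B u - mulE B v = -(mulE B v - mulE B u) by abel,
      show y' - y = -(y - y') by abel, inner_neg_neg]
  rw [hadj] at hco
  have hs : sigmaMinNZ B * ‖y - y'‖ ≤ ‖mulE Bᵀ (y - y')‖ := sigmaMinNZ_mul_norm_le B hrange
  have hnormeq : ‖mulE Bᵀ (y' - y)‖ = ‖mulE Bᵀ (y - y')‖ := by
    have h3 : mulE Bᵀ (y' - y) = -(mulE Bᵀ (y - y')) := by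
      rw [show y' - y = -(y - y') by abel]
      exact map_neg (Matrix.toEuclideanLin Bᵀ) _
    rw [h3, norm_neg]
  have h4 : (sigmaMinNZ B * ‖y - y'‖) ^ 2 ≤ ‖mulE Bᵀ (y' - y)‖ ^ 2 := by
    rw [hnormeq]
    exact pow_le_pow_left₀ (mul_nonneg (sigmaMinNZ_nonneg B) (norm_nonneg _)) hs 2
  have h5 : sigmaMinNZ B ^ 2 * ‖y - y'‖ ^ 2 ≤ Lx * ⟪mulE B v - mulE B u, y - y'⟫ := by
    calc sigmaMinNZ B ^ 2 * ‖y - y'‖ ^ 2 = (sigmaMinNZ B * ‖y - y'‖) ^ 2 := by ring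
      _ ≤ ‖mulE Bᵀ (y' - y)‖ ^ 2 := h4
      _ ≤ Lx * ⟪mulE B v - mulE B u, y - y'⟫ := hco
  rw [div_mul_eq_mul_div, div_le_iff₀ hLpos]
  linarith [h5]
end

section
/- (Quantitative geometric decay in the proof of Theorem 3.) Assume Assumption A' holds, φ is μφ-strongly convex with μφ > 0, κφ = (σmax(B)²/μx + Ly)/μφ, ρ = 1 − 1/√κφ, and θ = 1 − 1/(c√κφ) for some constant c > 1 (so θ > ρ). Let ε²_{k+1} = θ·ε²_k with ε₁ = (√θ − √ρ)·√(μφ(Φ(y^0) − Φ(y^*)) ), and suppose the iterates satisfy ‖x^{k+1} − x*(z^k)‖² ≤ ε²_{k+1}/σmax(B)², z^k = y^k + ((√κφ−1)/(√κφ+1))(y^k − y^{k−1}) for k ≥ 1, and the inexact-APG bound Φ(y^k) − Φ(y*) ≤ ρ^k(√(2(Φ(y^0) − Φ(y*))) + √(2/μφ)·Σ_{i=1}^{k} ρ^{−i/2}ε_i)². Then for all k ≥ 1: ‖x*(z^k) − x*‖² < C₂·ε₁²·θ^k and ‖x^{k+1} − x*‖² < C₃·ε₁²·θ^k, where C₁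 = (2σmax(B)²/(μx²μφ))·( √κφ(2 + √ρ)/(√κφ + 1) )², C₂ = 8C₁/( μφ(√θ − √ρ)² ), and C₃ = 2(C₂ + 1/σmax(B)²). -/
open scoped RealInnerProductSpace
open Matrix

/- ### Auxiliary lemmas -/

lemma sc_combo' {n : ℕ} {μ : ℝ} {f : EuclideanSpace ℝ (Fin n) → ℝ}
    (hf : StrongConvex μ f) (a b : EuclideanSpace ℝ (Fin n)) {t : ℝ}
    (ht0 : 0 ≤ t) (ht1 : t ≤ 1) :
    f (t • a + (1-t) • b) ≤ t * f a + (1-t)*f b - μ/2*t*(1-t)*‖a-b‖^2 := by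
  have h := hf.2 (Set.mem_univ a) (Set.mem_univ b) ht0 (by linarith : (0:ℝ) ≤ 1 - t) (by ring)
  have h1 : ‖t•a+(1-t)•b‖^2 = t^2*‖a‖^2 + 2*(t*(1-t))*⟪a,b⟫ + (1-t)^2*‖b‖^2 := by
    rw [@norm_add_sq_real, norm_smul, norm_smul, real_inner_smul_left, real_inner_smul_right]
    simp only [Real.norm_eq_abs, mul_pow, sq_abs]
    ring
  have h2 : ‖a-b‖^2 = ‖a‖^2 - 2*⟪a,b⟫ + ‖b‖^2 := by
    rw [@norm_sub_sq_real]
  have hid : ‖t•a + (1-t)•b‖^2 = t*‖a‖^2 + (1-t)*‖b‖^2 - t*(1-t)*‖a-b‖^2 := by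
    linear_combination h1 + (t*(1-t))*h2
  simp only [smul_eq_mul] at h
  rw [hid] at h
  linarith

lemma limit_aux' {A B K : ℝ} (hK : 0 ≤ K)
    (h : ∀ t:ℝ, 0 < t → t < 1 → A + K*(1-t) ≤ B) : A + K ≤ B := by
  by_contra hc
  push_neg at hc
  rcases eq_or_lt_of_le hK with h0 | hKpos
  · have := h (1/2) (by norm_num) (by norm_num); rw [← h0] at this hc; linarith
  · set t := min ((A + K - B)/(2*K)) (1/2) with hts
    have htp : 0 < (A + K - B)/(2*K) := div_pos (by linarith) (by linarith)
    have ht0 : 0 < t := lt_min htp (by norm_num)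
    have ht1 : t < 1 := lt_of_le_of_lt (min_le_right _ _) (by norm_num)
    have h2 := h t ht0 ht1
    have h3 : t ≤ (A+K-B)/(2*K) := min_le_left _ _
    have h4 : K*t ≤ (A+K-B)/2 := by
      calc K*t ≤ K*((A+K-B)/(2*K)) := by nlinarith
      _ = (A+K-B)/2 := by field_simp
    linarith

lemma keyA' {n : ℕ} {μ : ℝ} (hμ : 0 ≤ μ)
    {f : EuclideanSpace ℝ (Fin n) → ℝ} (hf : StrongConvex μ f)
    {g : EuclideanSpace ℝ (Fin n) → EReal} (hgc : ConvexER g)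
    {u v : EuclideanSpace ℝ (Fin n)} {bu bv : ℝ}
    (hgu : g u = (bu : EReal)) (hgv : g v = (bv : EReal))
    (hmin : ∀ z, (f u : EReal) + g u ≤ (f z : EReal) + g z) :
    f u + bu + μ / 2 * ‖v - u‖ ^ 2 ≤ f v + bv := by
  have key : ∀ t:ℝ, 0 < t → t < 1 →
      (f u + bu) + (μ/2*‖v-u‖^2)*(1-t) ≤ f v + bv := by
    intro t ht0 ht1
    set w := t • v + (1-t) • u with hw
    have hgw : g w ≤ (((t*bv + (1-t)*bu : ℝ)) : EReal) := by
      have := hgc v u t (1-t) (le_of_lt ht0) (by linarith) (by ring)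
      rw [hgu, hgv] at this
      calc g w ≤ (t:EReal)*(bv:EReal) + ((1-t:ℝ):EReal)*(bu:EReal) := this
        _ = (((t*bv + (1-t)*bu : ℝ)) : EReal) := by
            rw [← EReal.coe_mul, ← EReal.coe_mul, ← EReal.coe_add]
    have hmw := hmin w
    rw [hgu] at hmw
    have h2 : ((f u + bu : ℝ) : EReal) ≤ ((f w + (t*bv + (1-t)*bu) : ℝ) : EReal) := by
      calc ((f u + bu : ℝ) : EReal) = (f u : EReal) + (bu : EReal) := EReal.coe_add _ _
        _ ≤ (f w : EReal) + g w := hmw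
        _ ≤ (f w : EReal) + (((t*bv + (1-t)*bu : ℝ)) : EReal) := add_le_add (le_refl _) hgw
        _ = ((f w + (t*bv + (1-t)*bu) : ℝ) : EReal) := (EReal.coe_add _ _).symm
    have h3 : f u + bu ≤ f w + (t*bv + (1-t)*bu) := EReal.coe_le_coe_iff.mp h2
    have h4 := sc_combo' hf v u (le_of_lt ht0) (le_of_lt ht1)
    rw [← hw] at h4
    have h5 : t*((f u + bu) + (μ/2*‖v-u‖^2)*(1-t)) ≤ t*(f v + bv) := by nlinarith
    exact (mul_le_mul_iff_right₀ ht0).mp h5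
  exact limit_aux' (by positivity) key

lemma mulE_norm_le {m n : ℕ} (B : Matrix (Fin m) (Fin n) ℝ) (x : EuclideanSpace ℝ (Fin n)) :
    ‖mulE B x‖ ≤ sigmaMax B * ‖x‖ := by
  simpa [mulE, sigmaMax] using
    (LinearMap.toContinuousLinearMap (Matrix.toEuclideanLin B)).le_opNorm x

lemma mulE_adj {m n : ℕ} (B : Matrix (Fin m) (Fin n) ℝ)
    (p : EuclideanSpace ℝ (Fin m)) (q : EuclideanSpace ℝ (Fin n)) :
    ⟪mulE Bᵀ p, q⟫ = ⟪p, mulE B q⟫ := by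
  have h : Bᵀ = Bᴴ := by ext i j; simp [Matrix.conjTranspose]
  rw [mulE, mulE, h, Matrix.toEuclideanLin_conjTranspose_eq_adjoint]
  exact LinearMap.adjoint_inner_left _ _ _

lemma lin_convexOn {n : ℕ} (s : EuclideanSpace ℝ (Fin n)) :
    ConvexOn ℝ Set.univ (fun x : EuclideanSpace ℝ (Fin n) => ⟪s, x⟫) := by
  refine ⟨convex_univ, fun x _ y _ a b _ _ _ => le_of_eq ?_⟩
  simp only [inner_add_right, real_inner_smul_right, smul_eq_mul]

lemma xstar_lipschitz {dx dy : ℕ} {μx : ℝ} (hμx : 0 < μx)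
    {f1 : EuclideanSpace ℝ (Fin dx) → ℝ} (hf1sc : StrongConvex μx f1)
    {f2 : EuclideanSpace ℝ (Fin dx) → EReal} (hf2prop : ProperER f2) (hf2conv : ConvexER f2)
    {B : Matrix (Fin dy) (Fin dx) ℝ}
    {xstar : EuclideanSpace ℝ (Fin dy) → EuclideanSpace ℝ (Fin dx)}
    (hxstar : ∀ y x, (f1 (xstar y) : EReal) + f2 (xstar y) + ((⟪mulE Bᵀ y, xstar y⟫ : ℝ) : EReal)
        ≤ (f1 x : EReal) + f2 x + ((⟪mulE Bᵀ y, x⟫ : ℝ) : EReal))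
    (w w' : EuclideanSpace ℝ (Fin dy)) :
    ‖xstar w - xstar w'‖ ≤ (sigmaMax B / μx) * ‖w - w'‖ := by
  obtain ⟨x0, hx0⟩ := hf2prop.2
  obtain ⟨b0, hb0⟩ : ∃ b0 : ℝ, f2 x0 = (b0 : EReal) :=
    ⟨(f2 x0).toReal, (EReal.coe_toReal hx0 (hf2prop.1 x0)).symm⟩
  have hfin : ∀ v : EuclideanSpace ℝ (Fin dy), ∃ b : ℝ, f2 (xstar v) = (b : EReal) := by
    intro v
    have hne : f2 (xstar v) ≠ ⊤ := by
      intro htop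
      have := hxstar v x0
      rw [htop, hb0] at this
      rw [show (f1 (xstar v) : EReal) + ⊤ + ((⟪mulE Bᵀ v, xstar v⟫ : ℝ) : EReal) = ⊤ by
        rw [EReal.coe_add_top, EReal.top_add_of_ne_bot (EReal.coe_ne_bot _)]] at this
      rw [show (f1 x0 : EReal) + (b0 : EReal) + ((⟪mulE Bᵀ v, x0⟫ : ℝ) : EReal)
          = ((f1 x0 + b0 + ⟪mulE Bᵀ v, x0⟫ : ℝ) : EReal) by push_cast; rfl] at this
      exact (EReal.coe_ne_top _) (top_le_iff.mp this)
    exact ⟨(f2 (xstar v)).toReal, (EReal.coe_toReal hne (hf2prop.1 _)).symm⟩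
  have hsc : ∀ s : EuclideanSpace ℝ (Fin dx),
      StrongConvex μx (fun x => f1 x + ⟪s, x⟫) := by
    intro s
    have h := hf1sc.add (lin_convexOn s)
    unfold StrongConvex
    have hfun : (fun x : EuclideanSpace ℝ (Fin dx) => f1 x + ⟪s, x⟫ - μx/2*‖x‖^2)
        = fun x => (f1 x - μx/2*‖x‖^2) + ⟪s, x⟫ := by funext x; ring
    rw [show (μx / 2 : ℝ) = μx/2 from rfl, hfun]
    exact h
  obtain ⟨bu, hbu⟩ := hfin w
  obtain ⟨bv, hbv⟩ := hfin w'
  set u := xstar w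
  set v := xstar w'
  have hminw : ∀ z, ((f1 u + ⟪mulE Bᵀ w, u⟫ : ℝ) : EReal) + f2 u
      ≤ ((f1 z + ⟪mulE Bᵀ w, z⟫ : ℝ) : EReal) + f2 z := by
    intro z
    have := hxstar w z
    rw [add_right_comm (f1 u : EReal) (f2 u), ← EReal.coe_add] at this
    rw [add_right_comm (f1 z : EReal) (f2 z), ← EReal.coe_add] at this
    exact this
  have hminw' : ∀ z, ((f1 v + ⟪mulE Bᵀ w', v⟫ : ℝ) : EReal) + f2 v
      ≤ ((f1 z + ⟪mulE Bᵀ w', z⟫ : ℝ) : EReal) + f2 z := by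
    intro z
    have := hxstar w' z
    rw [add_right_comm (f1 v : EReal) (f2 v), ← EReal.coe_add] at this
    rw [add_right_comm (f1 z : EReal) (f2 z), ← EReal.coe_add] at this
    exact this
  have h1 := keyA' (le_of_lt hμx) (hsc (mulE Bᵀ w)) hf2conv hbu hbv hminw
  have h2 := keyA' (le_of_lt hμx) (hsc (mulE Bᵀ w')) hf2conv hbv hbu hminw'
  have hnorm : ‖u - v‖ = ‖v - u‖ := norm_sub_rev _ _
  have hsum : μx * ‖u - v‖^2 ≤ ⟪mulE Bᵀ (w' - w), u - v⟫ := by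
    have e1 : ⟪mulE Bᵀ w, v⟫ - ⟪mulE Bᵀ w, u⟫ + (⟪mulE Bᵀ w', u⟫ - ⟪mulE Bᵀ w', v⟫)
        = ⟪mulE Bᵀ (w' - w), u - v⟫ := by
      have hl : mulE Bᵀ (w' - w) = mulE Bᵀ w' - mulE Bᵀ w := by simp [mulE]
      rw [hl, inner_sub_left, inner_sub_right, inner_sub_right]
      ring
    have hnorm2 : μx/2*‖u - v‖^2 = μx/2*‖v - u‖^2 := by rw [hnorm]
    linarith [h1, h2, e1, hnorm2]
  have hbnd : ⟪mulE Bᵀ (w' - w), u - v⟫ ≤ sigmaMax B * ‖w - w'‖ * ‖u - v‖ := by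
    rw [mulE_adj]
    calc ⟪w' - w, mulE B (u - v)⟫ ≤ ‖w' - w‖ * ‖mulE B (u - v)‖ := real_inner_le_norm _ _
      _ ≤ ‖w' - w‖ * (sigmaMax B * ‖u - v‖) :=
          mul_le_mul_of_nonneg_left (mulE_norm_le _ _) (norm_nonneg _)
      _ = sigmaMax B * ‖w - w'‖ * ‖u - v‖ := by rw [norm_sub_rev]; ring
  have hσ : (0:ℝ) ≤ sigmaMax B := norm_nonneg _
  rcases eq_or_lt_of_le (norm_nonneg (u - v)) with h0 | hpos
  · rw [← h0]
    exact mul_nonneg (div_nonneg hσ hμx.le) (norm_nonneg _)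
  · have hq := le_trans hsum hbnd
    rw [div_mul_eq_mul_div, le_div_iff₀ hμx]
    nlinarith [hq, hpos]

lemma geom_Icc (r : ℝ) (hr : r ≠ 1) (k : ℕ) :
    ∑ i ∈ Finset.Icc 1 k, r^i = (r^(k+1) - r)/(r-1) := by
  induction k with
  | zero => simp
  | succ k ih =>
    rw [Finset.sum_Icc_succ_top (by norm_num : 1 ≤ k+1), ih]
    have : r - 1 ≠ 0 := sub_ne_zero.mpr hr
    field_simp
    ring

lemma gapbound (θ ρ μφ D0 : ℝ) (ε : ℕ → ℝ)
    (hρ0 : 0 ≤ ρ) (hρθ : ρ < θ) (hθ1 : θ < 1) (hθ0 : 0 < θ)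
    (hμφ : 0 < μφ) (hD0 : 0 < D0)
    (hε1 : ε 1 = (Real.sqrt θ - Real.sqrt ρ) * Real.sqrt (μφ * D0))
    (hεrec : ∀ k, 1 ≤ k → ε (k+1)^2 = θ * ε k^2)
    (k : ℕ) (hk : 1 ≤ k) :
    ρ^k * (Real.sqrt (2*D0) + Real.sqrt (2/μφ) *
      ∑ i ∈ Finset.Icc 1 k, ρ^(-(i:ℝ)/2) * ε i)^2 < 8*D0*θ^k := by
  have hθk : 0 < θ^k := pow_pos hθ0 k
  rcases eq_or_lt_of_le hρ0 with h0 | hρpos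
  · rw [← h0, zero_pow (by omega : k ≠ 0)]
    nlinarith
  set sθ := Real.sqrt θ with hsθ
  set sρ := Real.sqrt ρ with hsρ
  have hsθpos : 0 < sθ := Real.sqrt_pos.mpr hθ0
  have hsρpos : 0 < sρ := Real.sqrt_pos.mpr hρpos
  have hsρθ : sρ < sθ := Real.sqrt_lt_sqrt hρ0 hρθ
  have hsθsq : sθ^2 = θ := Real.sq_sqrt hθ0.le
  have hsρsq : sρ^2 = ρ := Real.sq_sqrt hρ0
  have hε1pos : 0 < ε 1 := by
    rw [hε1]
    exact mul_pos (by linarith) (Real.sqrt_pos.mpr (by positivity))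
  have habs : ∀ i : ℕ, 1 ≤ i → |ε i| = sθ^(i-1) * ε 1 := by
    intro i hi
    induction i, hi using Nat.le_induction with
    | base => simp [abs_of_pos hε1pos]
    | succ n hn ih =>
      have h2 : |ε (n+1)| = Real.sqrt (ε (n+1)^2) := (Real.sqrt_sq_eq_abs _).symm
      rw [h2, hεrec n hn, Real.sqrt_mul hθ0.le, Real.sqrt_sq_eq_abs, ih, ← hsθ]
      have : (n+1) - 1 = (n-1) + 1 := by omega
      rw [this, pow_succ]
      ring
  have hrpow : ∀ i : ℕ, ρ^(-(i:ℝ)/2) = (sρ⁻¹)^i := by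
    intro i
    have h1 : (-(i:ℝ)/2) = ((-1:ℝ)/2) * (i:ℕ) := by ring
    rw [h1, Real.rpow_mul hρ0, Real.rpow_natCast]
    congr 1
    rw [show ((-1:ℝ)/2) = -(1/2) by norm_num, Real.rpow_neg hρ0, ← Real.sqrt_eq_rpow]
  set r := sθ/sρ with hr
  have hr1 : 1 < r := (one_lt_div hsρpos).mpr hsρθ
  have hterm : ∀ i ∈ Finset.Icc 1 k, |ρ^(-(i:ℝ)/2) * ε i| = (ε 1/sθ) * r^i := by
    intro i hi
    obtain ⟨hi1, -⟩ := Finset.mem_Icc.mp hi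
    rw [abs_mul, abs_of_nonneg (by positivity : (0:ℝ) ≤ ρ^(-(i:ℝ)/2)), habs i hi1,
      hrpow i, hr, div_pow, inv_pow]
    have : sθ^i = sθ * sθ^(i-1) := by
      rw [← pow_succ']
      congr 1
      omega
    field_simp
    rw [this]
    ring
  set S := ∑ i ∈ Finset.Icc 1 k, ρ^(-(i:ℝ)/2) * ε i with hS
  have hSabs : |S| ≤ (ε 1/sθ) * ((r^(k+1) - r)/(r-1)) := by
    calc |S| ≤ ∑ i ∈ Finset.Icc 1 k, |ρ^(-(i:ℝ)/2) * ε i| := Finset.abs_sum_le_sum_abs _ _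
      _ = ∑ i ∈ Finset.Icc 1 k, (ε 1/sθ) * r^i := Finset.sum_congr rfl hterm
      _ = (ε 1/sθ) * ∑ i ∈ Finset.Icc 1 k, r^i := by rw [Finset.mul_sum]
      _ = (ε 1/sθ) * ((r^(k+1) - r)/(r-1)) := by rw [geom_Icc r hr1.ne' k]
  set q := r^k with hq
  have hq1 : 1 < q := one_lt_pow₀ hr1 (by omega)
  have hkey : Real.sqrt (2/μφ) * ((ε 1/sθ) * (r^(k+1)/(r-1))) = Real.sqrt (2*D0) * q := by
    have h1 : Real.sqrt (2/μφ) * Real.sqrt (μφ*D0) = Real.sqrt (2*D0) := by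
      rw [← Real.sqrt_mul (by positivity)]
      congr 1
      field_simp
    have h2 : r^(k+1) = r * q := by rw [hq, pow_succ]; ring
    have h3 : r - 1 = (sθ - sρ)/sρ := by rw [hr]; field_simp
    have hne1 : sθ ≠ 0 := hsθpos.ne'
    have hne2 : sρ ≠ 0 := hsρpos.ne'
    have hne3 : sθ - sρ ≠ 0 := sub_ne_zero.mpr hsρθ.ne'
    have e2 : (ε 1/sθ) * (r^(k+1)/(r-1)) = Real.sqrt (μφ*D0) * q := by
      rw [h2, h3, hr, hε1]
      field_simp
    rw [e2, ← mul_assoc, h1]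
  set X := Real.sqrt (2*D0) + Real.sqrt (2/μφ) * S with hX
  have hXabs : |X| ≤ Real.sqrt (2*D0) * (1+q) := by
    have hsq : 0 ≤ Real.sqrt (2/μφ) := Real.sqrt_nonneg _
    have h4 : (r^(k+1) - r)/(r-1) ≤ r^(k+1)/(r-1) :=
      (div_le_div_iff_of_pos_right (by linarith)).mpr (by nlinarith [hr1])
    have h5 : 0 ≤ ε 1 / sθ := by positivity
    calc |X| ≤ Real.sqrt (2*D0) + Real.sqrt (2/μφ) * |S| := by
          rw [hX]
          refine (abs_add_le _ _).trans ?_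
          rw [abs_of_nonneg (Real.sqrt_nonneg _), abs_mul, abs_of_nonneg hsq]
      _ ≤ Real.sqrt (2*D0) + Real.sqrt (2/μφ) * ((ε 1/sθ) * ((r^(k+1)-r)/(r-1))) :=
          add_le_add (le_refl _) (mul_le_mul_of_nonneg_left hSabs hsq)
      _ ≤ Real.sqrt (2*D0) + Real.sqrt (2/μφ) * ((ε 1/sθ) * (r^(k+1)/(r-1))) :=
          add_le_add (le_refl _) (mul_le_mul_of_nonneg_left (mul_le_mul_of_nonneg_left h4 h5) hsq)
      _ = Real.sqrt (2*D0) + Real.sqrt (2*D0) * q := by rw [hkey]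
      _ = Real.sqrt (2*D0) * (1+q) := by ring
  have hX2 : X^2 ≤ (Real.sqrt (2*D0) * (1+q))^2 := by
    rw [← sq_abs X]
    exact pow_le_pow_left₀ (abs_nonneg X) hXabs 2
  have hr2 : r^2 = θ/ρ := by rw [hr, div_pow, hsθsq, hsρsq]
  have hq2 : q^2 = (θ/ρ)^k := by rw [hq, ← pow_mul, mul_comm, pow_mul, hr2]
  have hρk : (0:ℝ) < ρ^k := pow_pos hρpos k
  have hρq : ρ^k * q^2 = θ^k := by
    rw [hq2, div_pow]
    field_simp
  calc ρ^k * X^2 ≤ ρ^k * (Real.sqrt (2*D0)*(1+q))^2 :=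
        mul_le_mul_of_nonneg_left hX2 (pow_nonneg hρ0 k)
    _ = ρ^k * (2*D0) * (1+q)^2 := by
        rw [mul_pow, Real.sq_sqrt (by positivity : (0:ℝ) ≤ 2*D0)]
        ring
    _ < ρ^k * (2*D0) * (4*q^2) := by
        apply mul_lt_mul_of_pos_left ?_ (by positivity)
        nlinarith [hq1]
    _ = 8*D0*(ρ^k*q^2) := by ring
    _ = 8*D0*θ^k := by rw [hρq]

set_option maxHeartbeats 1000000 in
/-- quantitative geometric decay in the proof of Theorem 3. -/
theorem idapg_quantitative_decay {dx dy : ℕ} (μx Lx Ly μφ : ℝ)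
    (hμx : 0 < μx) (hLx : μx ≤ Lx) (hLy : 0 ≤ Ly) (hμφ : 0 < μφ)
    (f1 : EuclideanSpace ℝ (Fin dx) → ℝ)
    (f1' : EuclideanSpace ℝ (Fin dx) → EuclideanSpace ℝ (Fin dx))
    (hf1grad : ∀ x, HasGradientAt f1 (f1' x) x)
    (hf1sc : StrongConvex μx f1)
    (hf1sm : ∀ x x', ‖f1' x - f1' x'‖ ≤ Lx * ‖x - x'‖)
    (g1 : EuclideanSpace ℝ (Fin dy) → ℝ)
    (g1' : EuclideanSpace ℝ (Fin dy) → EuclideanSpace ℝ (Fin dy))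
    (hg1grad : ∀ y, HasGradientAt g1 (g1' y) y)
    (hg1conv : ConvexOn ℝ Set.univ g1)
    (hg1sm : ∀ y y', ‖g1' y - g1' y'‖ ≤ Ly * ‖y - y'‖)
    (f2 : EuclideanSpace ℝ (Fin dx) → EReal)
    (hf2prop : ProperER f2) (hf2conv : ConvexER f2) (hf2lsc : LowerSemicontinuous f2)
    (g2 : EuclideanSpace ℝ (Fin dy) → EReal)
    (hg2prop : ProperER g2) (hg2conv : ConvexER g2) (hg2lsc : LowerSemicontinuous g2)
    (B : Matrix (Fin dy) (Fin dx) ℝ) (hB : 0 < sigmaMax B)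
    (xstar : EuclideanSpace ℝ (Fin dy) → EuclideanSpace ℝ (Fin dx))
    (hxstar : ∀ y x, (f1 (xstar y) : EReal) + f2 (xstar y) + ((⟪mulE Bᵀ y, xstar y⟫ : ℝ) : EReal)
        ≤ (f1 x : EReal) + f2 x + ((⟪mulE Bᵀ y, x⟫ : ℝ) : EReal))
    -- the dual function φ, its gradient and strong convexity
    (φ : EuclideanSpace ℝ (Fin dy) → ℝ)
    (hφgrad : ∀ y, HasGradientAt φ (g1' y - mulE B (xstar y)) y)
    (hφsc : StrongConvex μφ φ)
    -- the constants
    (κφ ρ c θ : ℝ)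
    (hκφ : κφ = (sigmaMax B ^ 2 / μx + Ly) / μφ) (hκφ1 : 1 ≤ κφ)
    (hρ : ρ = 1 - 1 / Real.sqrt κφ)
    (hc : 1 < c)
    (hθ : θ = 1 - 1 / (c * Real.sqrt κφ))
    -- Φ = φ + g2 with minimizer y*, and the saddle point (x*, y*) with x* = x*(y*)
    (Φ : EuclideanSpace ℝ (Fin dy) → EReal)
    (hΦ : ∀ y, Φ y = (φ y : EReal) + g2 y)
    (xs : EuclideanSpace ℝ (Fin dx)) (ys : EuclideanSpace ℝ (Fin dy))
    (hysmin : ∀ y, Φ ys ≤ Φ y)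
    (hxs : xs = xstar ys)
    -- the iterates
    (x : ℕ → EuclideanSpace ℝ (Fin dx))
    (y z : ℕ → EuclideanSpace ℝ (Fin dy))
    -- the (positive, finite) initial dual gap
    (D0 : ℝ) (hD0 : Φ (y 0) = Φ ys + (D0 : EReal)) (hD0pos : 0 < D0)
    -- the error tolerances
    (ε : ℕ → ℝ)
    (hε1 : ε 1 = (Real.sqrt θ - Real.sqrt ρ) * Real.sqrt (μφ * (D0 : ℝ)))
    (hεrec : ∀ k, 1 ≤ k → ε (k + 1) ^ 2 = θ * ε k ^ 2)
    (herr : ∀ k, ‖x (k + 1) - xstar (z k)‖ ^ 2 ≤ ε (k + 1) ^ 2 / sigmaMax B ^ 2)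
    (hz : ∀ k, 1 ≤ k →
      z k = y k + ((Real.sqrt κφ - 1) / (Real.sqrt κφ + 1)) • (y k - y (k - 1)))
    -- the inexact-APG bound
    (hapg : ∀ k : ℕ, 1 ≤ k →
      Φ (y k) ≤ Φ ys + ((ρ ^ k * (Real.sqrt (2 * D0) + Real.sqrt (2 / μφ) *
        ∑ i ∈ Finset.Icc 1 k, ρ ^ (-(i : ℝ) / 2) * ε i) ^ 2 : ℝ) : EReal))
    -- the constants C₁, C₂, C₃
    (C1 C2 C3 : ℝ)
    (hC1 : C1 = 2 * sigmaMax B ^ 2 / (μx ^ 2 * μφ) *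
      (Real.sqrt κφ * (2 + Real.sqrt ρ) / (Real.sqrt κφ + 1)) ^ 2)
    (hC2 : C2 = 8 * C1 / (μφ * (Real.sqrt θ - Real.sqrt ρ) ^ 2))
    (hC3 : C3 = 2 * (C2 + 1 / sigmaMax B ^ 2)) :
    ∀ k : ℕ, 1 ≤ k →
      ‖xstar (z k) - xs‖ ^ 2 < C2 * ε 1 ^ 2 * θ ^ k ∧
      ‖x (k + 1) - xs‖ ^ 2 < C3 * ε 1 ^ 2 * θ ^ k := by
  -- basic constants
  set s := Real.sqrt κφ with hs
  have hs1 : 1 ≤ s := by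
    rw [hs, show (1:ℝ) = Real.sqrt 1 by rw [Real.sqrt_one]]
    exact Real.sqrt_le_sqrt hκφ1
  have hspos : 0 < s := lt_of_lt_of_le one_pos hs1
  have hc0 : (0:ℝ) < c := lt_trans one_pos hc
  have hρ0 : 0 ≤ ρ := by
    rw [hρ]
    have : 1/s ≤ 1 := by rw [div_le_one hspos]; exact hs1
    linarith
  have hρθ : ρ < θ := by
    rw [hρ, hθ]
    have h1 : s < c*s := by nlinarith
    have := one_div_lt_one_div_of_lt hspos h1
    linarith
  have hθ1 : θ < 1 := by
    rw [hθ]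
    have : 0 < 1/(c*s) := by positivity
    linarith
  have hθ0 : 0 < θ := by
    rw [hθ]
    have h1 : 1/(c*s) < 1 := by
      rw [div_lt_one (by positivity)]
      nlinarith
    linarith
  set sθ := Real.sqrt θ with hsθ
  set sρ := Real.sqrt ρ with hsρ
  have hsθpos : 0 < sθ := Real.sqrt_pos.mpr hθ0
  have hsρθ : sρ < sθ := Real.sqrt_lt_sqrt hρ0 hρθ
  have hsρ0 : 0 ≤ sρ := Real.sqrt_nonneg _
  have hsθsq : sθ^2 = θ := Real.sq_sqrt hθ0.le
  have hsρsq : sρ^2 = ρ := Real.sq_sqrt hρ0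
  have hε1pos : 0 < ε 1 := by
    rw [hε1]
    exact mul_pos (by linarith) (Real.sqrt_pos.mpr (by positivity))
  have hε1sq : ε 1^2 = (sθ - sρ)^2 * (μφ*D0) := by
    rw [hε1, mul_pow, Real.sq_sqrt (by positivity : (0:ℝ) ≤ μφ*D0)]
  have hεpow : ∀ j : ℕ, ε (j+1)^2 = θ^j * ε 1^2 := by
    intro j
    induction j with
    | zero => simp
    | succ n ih =>
      rw [hεrec (n+1) (by omega), ih, pow_succ]
      ring
  -- Φ ys is finite
  obtain ⟨w0, hw0⟩ := hg2prop.2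
  obtain ⟨b0, hb0⟩ : ∃ b0 : ℝ, g2 w0 = (b0 : EReal) :=
    ⟨(g2 w0).toReal, (EReal.coe_toReal hw0 (hg2prop.1 w0)).symm⟩
  have hys_ne_top : Φ ys ≠ ⊤ := by
    intro h
    have := hysmin w0
    rw [h, hΦ w0, hb0, ← EReal.coe_add] at this
    exact (EReal.coe_ne_top _) (top_le_iff.mp this)
  have hg2ys_ne_top : g2 ys ≠ ⊤ := by
    intro h
    exact hys_ne_top (by rw [hΦ ys, h, EReal.coe_add_top])
  obtain ⟨bs, hbs⟩ : ∃ bs : ℝ, g2 ys = (bs : EReal) :=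
    ⟨(g2 ys).toReal, (EReal.coe_toReal hg2ys_ne_top (hg2prop.1 ys)).symm⟩
  -- the strong-convexity bound at the minimizer
  have hA : ∀ (v : EuclideanSpace ℝ (Fin dy)) (r : ℝ),
      Φ v ≤ Φ ys + ((r : ℝ) : EReal) → μφ/2 * ‖v - ys‖^2 ≤ r := by
    intro v r h
    have hgv_ne_top : g2 v ≠ ⊤ := by
      intro ht
      rw [hΦ v, ht, EReal.coe_add_top, hΦ ys, hbs, ← EReal.coe_add, ← EReal.coe_add] at h
      exact (EReal.coe_ne_top _) (top_le_iff.mp h)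
    obtain ⟨bv, hbv⟩ : ∃ bv : ℝ, g2 v = (bv : EReal) :=
      ⟨(g2 v).toReal, (EReal.coe_toReal hgv_ne_top (hg2prop.1 v)).symm⟩
    have hmin : ∀ w, (φ ys : EReal) + g2 ys ≤ (φ w : EReal) + g2 w := by
      intro w
      rw [← hΦ ys, ← hΦ w]
      exact hysmin w
    have hkey := keyA' (le_of_lt hμφ) hφsc hg2conv hbs hbv hmin
    rw [hΦ v, hbv, hΦ ys, hbs, ← EReal.coe_add, ← EReal.coe_add, ← EReal.coe_add] at h
    have h' : φ v + bv ≤ φ ys + bs + r := EReal.coe_le_coe_iff.mp h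
    linarith
  -- bound on ‖y j - ys‖²
  have hY : ∀ j : ℕ, μφ/2 * ‖y j - ys‖^2 < 8*D0*θ^j := by
    intro j
    rcases Nat.eq_zero_or_pos j with h0 | hj
    · subst h0
      have := hA (y 0) D0 (le_of_eq hD0)
      simp only [pow_zero, mul_one]
      linarith
    · have h1 := hA (y j) _ (hapg j hj)
      have h2 := gapbound θ ρ μφ D0 ε hρ0 hρθ hθ1 hθ0 hμφ hD0pos hε1 hεrec j hj
      linarith
  set N := Real.sqrt (16*D0/μφ) with hN
  have hNpos : 0 < N := Real.sqrt_pos.mpr (by positivity)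
  have hNsq : N^2 = 16*D0/μφ := Real.sq_sqrt (by positivity)
  have hYn : ∀ j : ℕ, ‖y j - ys‖ < N * sθ^j := by
    intro j
    have h1 := hY j
    have h2 : ‖y j - ys‖^2 < (N*sθ^j)^2 := by
      rw [mul_pow, hNsq, ← pow_mul, mul_comm j 2, pow_mul, hsθsq]
      rw [div_mul_eq_mul_div, lt_div_iff₀ hμφ]
      nlinarith
    have h3 : 0 < N*sθ^j := by positivity
    nlinarith [norm_nonneg (y j - ys)]
  -- bound on ‖z k - ys‖
  set β := (s-1)/(s+1) with hβ
  have hβ0 : 0 ≤ β := div_nonneg (by linarith) (by linarith)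
  set E := s*(2 + sρ)/(s+1) with hE
  have hEpos : 0 < E := by
    apply div_pos (mul_pos hspos (by linarith)) (by linarith)
  have hkeyineq : s - 1 ≤ s * sρ * sθ := by
    have h1 : s*ρ = s - 1 := by rw [hρ]; field_simp
    have h2 : s*sρ*sρ = s*ρ := by rw [← hsρsq]; ring
    have h3 : s*sρ*sρ ≤ s*sρ*sθ :=
      mul_le_mul_of_nonneg_left hsρθ.le (mul_nonneg hspos.le hsρ0)
    linarith
  have hz_bound : ∀ k : ℕ, 1 ≤ k → ‖z k - ys‖ < N * sθ^k * E := by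
    intro k hk
    have hzk : z k - ys = (y k - ys) + β • (y k - y (k-1)) := by
      rw [hz k hk, hβ, hs, add_sub_right_comm]
    have h1 : ‖z k - ys‖ ≤ ‖y k - ys‖ + β * ‖y k - y (k-1)‖ := by
      rw [hzk]
      refine (norm_add_le _ _).trans ?_
      rw [norm_smul, Real.norm_eq_abs, abs_of_nonneg hβ0]
    have h2 : ‖y k - y (k-1)‖ ≤ ‖y k - ys‖ + ‖y (k-1) - ys‖ := by
      have : y k - y (k-1) = (y k - ys) - (y (k-1) - ys) := by abel
      rw [this]
      exact norm_sub_le _ _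
    have h3 := hYn k
    have h4 := hYn (k-1)
    have h5 : sθ^k = sθ^(k-1) * sθ := by
      rw [← pow_succ]
      congr 1
      omega
    have h6 : (1+β)*(N*sθ^k) + β*(N*sθ^(k-1)) ≤ N*sθ^k*E := by
      rw [h5]
      have hstep : ((1+β)*sθ + β) * (s+1) ≤ (sθ*E) * (s+1) := by
        have hsne : s + 1 ≠ 0 := by positivity
        have hb2 : β*(s+1) = s-1 := by rw [hβ]; field_simp
        have hE2 : E*(s+1) = s*(2+sρ) := by rw [hE]; field_simp
        have e1 : ((1+β)*sθ + β)*(s+1) = 2*s*sθ + (s-1) := by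
          linear_combination (sθ + 1) * hb2
        have e2 : (sθ*E)*(s+1) = 2*s*sθ + s*sρ*sθ := by
          linear_combination sθ * hE2
        rw [e1, e2]
        linarith [hkeyineq]
      have hstep2 : (1+β)*sθ + β ≤ sθ*E := by
        have := (mul_le_mul_iff_left₀ (by linarith : (0:ℝ) < s+1)).mp hstep
        exact this
      have hNsθ : 0 ≤ N * sθ^(k-1) := by positivity
      calc (1+β)*(N*(sθ^(k-1)*sθ)) + β*(N*sθ^(k-1))
          = (N*sθ^(k-1)) * ((1+β)*sθ + β) := by ring
        _ ≤ (N*sθ^(k-1)) * (sθ*E) := mul_le_mul_of_nonneg_left hstep2 hNsθ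
        _ = N*(sθ^(k-1)*sθ)*E := by ring
    calc ‖z k - ys‖ ≤ ‖y k - ys‖ + β * ‖y k - y (k-1)‖ := h1
      _ ≤ (1+β)*‖y k - ys‖ + β*‖y (k-1) - ys‖ := by
          have := mul_le_mul_of_nonneg_left h2 hβ0
          linarith
      _ < (1+β)*(N*sθ^k) + β*(N*sθ^(k-1)) := by
          have hb1 : (0:ℝ) < 1+β := by linarith
          have ha := mul_lt_mul_of_pos_left h3 hb1
          have hb := mul_le_mul_of_nonneg_left h4.le hβ0
          linarith
      _ ≤ N*sθ^k*E := h6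
  -- Lipschitz continuity of xstar
  have hlip := xstar_lipschitz hμx hf1sc hf2prop hf2conv hxstar
  -- nonzero facts
  have hμxne : μx ≠ 0 := hμx.ne'
  have hμφne : μφ ≠ 0 := hμφ.ne'
  have hσne : sigmaMax B ≠ 0 := hB.ne'
  have hdiffne : sθ - sρ ≠ 0 := sub_ne_zero.mpr hsρθ.ne'
  -- the constant identity
  have hconst : (sigmaMax B/μx)^2 * (N*E)^2 = C2 * ε 1^2 := by
    rw [hC2, hC1, hε1sq, mul_pow, hNsq]
    field_simp
    ring
  -- main argument
  intro k hk
  have hzb := hz_bound k hk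
  have hlipk : ‖xstar (z k) - xs‖ ≤ (sigmaMax B/μx) * ‖z k - ys‖ := by
    rw [hxs]
    exact hlip (z k) ys
  have hTpos : 0 < (sigmaMax B/μx) * (N * sθ^k * E) := by positivity
  have hlt : ‖xstar (z k) - xs‖ < (sigmaMax B/μx) * (N * sθ^k * E) := by
    calc ‖xstar (z k) - xs‖ ≤ (sigmaMax B/μx) * ‖z k - ys‖ := hlipk
      _ < (sigmaMax B/μx) * (N * sθ^k * E) := by
          apply mul_lt_mul_of_pos_left hzb (by positivity)
  have hsq1 : ‖xstar (z k) - xs‖^2 < ((sigmaMax B/μx) * (N * sθ^k * E))^2 :=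
    pow_lt_pow_left₀ hlt (norm_nonneg _) two_ne_zero
  have hpowk : (sθ^k)^2 = θ^k := by
    rw [← pow_mul, mul_comm, pow_mul, hsθsq]
  have hsq2 : ((sigmaMax B/μx) * (N * sθ^k * E))^2 = C2 * ε 1^2 * θ^k := by
    have : ((sigmaMax B/μx) * (N * sθ^k * E))^2
        = (sigmaMax B/μx)^2 * (N*E)^2 * (sθ^k)^2 := by ring
    rw [this, hconst, hpowk]
  have part1 : ‖xstar (z k) - xs‖^2 < C2 * ε 1^2 * θ^k := by
    rw [← hsq2]; exact hsq1
  refine ⟨part1, ?_⟩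
  -- part 2
  have hu : ‖x (k+1) - xstar (z k)‖^2 ≤ θ^k * ε 1^2 / sigmaMax B^2 := by
    have := herr k
    rw [hεpow k] at this
    exact this
  have htri : ‖x (k+1) - xs‖ ≤ ‖x (k+1) - xstar (z k)‖ + ‖xstar (z k) - xs‖ := by
    have : x (k+1) - xs = (x (k+1) - xstar (z k)) + (xstar (z k) - xs) := by abel
    rw [this]
    exact norm_add_le _ _
  have hsq3 : ‖x (k+1) - xs‖^2
      ≤ (‖x (k+1) - xstar (z k)‖ + ‖xstar (z k) - xs‖)^2 :=
    pow_le_pow_left₀ (norm_nonneg _) htri 2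
  have hC3eq : C3 * ε 1^2 * θ^k = 2*(θ^k * ε 1^2 / sigmaMax B^2) + 2*(C2 * ε 1^2 * θ^k) := by
    rw [hC3]
    field_simp
    ring
  rw [hC3eq]
  have hab : (‖x (k+1) - xstar (z k)‖ + ‖xstar (z k) - xs‖)^2
      ≤ 2*‖x (k+1) - xstar (z k)‖^2 + 2*‖xstar (z k) - xs‖^2 := by
    have e : (‖x (k+1) - xstar (z k)‖ + ‖xstar (z k) - xs‖)^2
        = ‖x (k+1) - xstar (z k)‖^2 + 2*‖x (k+1) - xstar (z k)‖*‖xstar (z k) - xs‖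
          + ‖xstar (z k) - xs‖^2 := by ring
    have h := two_mul_le_add_sq ‖x (k+1) - xstar (z k)‖ ‖xstar (z k) - xs‖
    linarith
  linarith [hsq3, hu, part1, hab]
end
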